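/- arXiv:2505.02688 — 5 statements merged into one kernel-verified Lean document; each statement's English description precedes it below -/
import Mathlib

section
/- Unbiasedness of the sample-wise backward scheme (Proposition prop_exp_equiv): For every deterministic control u ∈ ℝ^N, the sample-wise scheme and the discrete BSDE scheme satisfy, almost surely, E[Y^u_n | ℱ_n] = Y^{N,u}_n for all 0 ≤ n ≤ N and E[Z^u_n | ℱ_n] = Z^{N,u}_n for all 0 ≤ n ≤ N−1; in particular E[Y^u_n] = E[Y^{N,u}_n] and E[Z^u_n] = E[Z^{N,u}_n]. -/
open MeasureTheory ProbabilityTheory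

open Real NNReal in
lemma gaussian_memLp_two {v : ℝ≥0} (hv : v ≠ 0) :
    MemLp (id : ℝ → ℝ) 2 (gaussianReal 0 v) := by
  have hvpos : (0 : ℝ) < v := by
    exact_mod_cast zero_lt_iff.mpr hv
  rw [memLp_two_iff_integrable_sq aestronglyMeasurable_id,
    gaussianReal_of_var_ne_zero 0 hv,
    integrable_withDensity_iff (measurable_gaussianPDF 0 v)
      (Filter.Eventually.of_forall fun x => ENNReal.ofReal_lt_top)]
  have hb : (0 : ℝ) < (2 * v)⁻¹ := by positivity
  have key : Integrable (fun x : ℝ => x ^ 2 * Real.exp (-((2 * (v : ℝ))⁻¹) * x ^ 2)) := by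
    have h2 := integrable_rpow_mul_exp_neg_mul_sq hb (s := 2) (by norm_num)
    have hrw : ∀ x : ℝ, x ^ (2 : ℝ) = x ^ 2 := fun x => by
      rw [show ((2 : ℝ)) = ((2 : ℕ) : ℝ) by norm_num, Real.rpow_natCast]
    simpa [hrw] using h2
  have heq : (fun x : ℝ => id x ^ 2 * (gaussianPDF 0 v x).toReal)
      = fun x => (Real.sqrt (2 * π * v))⁻¹ *
        (x ^ 2 * Real.exp (-((2 * (v : ℝ))⁻¹) * x ^ 2)) := by
    funext x
    rw [gaussianPDF, ENNReal.toReal_ofReal (gaussianPDFReal_nonneg 0 v x), gaussianPDFReal]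
    rw [show -(x - 0) ^ 2 / (2 * (v : ℝ)) = -((2 * (v : ℝ))⁻¹) * x ^ 2 by
      rw [sub_zero]; field_simp]
    simp only [id]
    ring
  rw [heq]
  exact key.const_mul _

/-- Unbiasedness of the sample-wise backward scheme: the conditional expectation of the
sample-wise scheme `(Y^u_n, Z^u_n)` given `ℱ_n` coincides (a.s.) with the discrete BSDE scheme
`(Y^{N,u}_n, Z^{N,u}_n)`; in particular their expectations agree. -/
theorem samplewise_scheme_unbiased
    {Ω : Type*} {mΩ : MeasurableSpace Ω} (μ : Measure Ω) [IsProbabilityMeasure μ]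
    (T L : ℝ) (hT : 0 < T) (hL : 0 < L)
    (N : ℕ) (hN : 1 ≤ N) (h : ℝ) (hh : h = T / N)
    (ΔW : ℕ → Ω → ℝ)
    (hmeas : ∀ i, Measurable (ΔW i))
    (hindep : iIndepFun (fun i : Fin N => ΔW i) μ)
    (hlaw : ∀ i : Fin N, Measure.map (ΔW i) μ = gaussianReal 0 (Real.toNNReal h))
    (F : ℕ → MeasurableSpace Ω)
    (hF : ∀ n, F n = ⨆ i ∈ Finset.range n,
      MeasurableSpace.comap (ΔW i) (inferInstance : MeasurableSpace ℝ))
    (b : ℝ → ℝ → ℝ)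
    (hb : ∀ x y u v : ℝ, |b x u - b y v| ≤ L * (|x - y| + |u - v|))
    (σ : ℝ → ℝ)
    (hσ : ∀ u v : ℝ, |σ u - σ v| ≤ L * |u - v|)
    (β φ : ℝ → ℝ → ℝ) (ψ : ℝ → ℝ)
    (hβ : ∀ x y u v : ℝ, |β x u - β y v| ≤ L * (|x - y| + |u - v|))
    (hφ : ∀ x y u v : ℝ, |φ x u - φ y v| ≤ L * (|x - y| + |u - v|))
    (hψ : ∀ x y : ℝ, |ψ x - ψ y| ≤ L * |x - y|)
    (hβbd : ∀ x u : ℝ, |β x u| ≤ L)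
    (hbgrow : ∀ x u : ℝ, |b x u| ≤ L * (1 + |x|))
    (hφgrow : ∀ x u : ℝ, |φ x u| ≤ L * (1 + |x|))
    (hψgrow : ∀ x : ℝ, |ψ x| ≤ L * (1 + |x|))
    (x₀ : ℝ) (u : ℕ → ℝ) (X : ℕ → Ω → ℝ)
    (hX0 : X 0 = fun _ => x₀)
    (hXrec : ∀ n, X (n + 1) = fun ω => X n ω + b (X n ω) (u n) * h + σ (u n) * ΔW n ω)
    -- discrete BSDE scheme
    (Yd Zd : ℕ → Ω → ℝ)
    (hYdN : Yd N = fun ω => ψ (X N ω))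
    (hYd : ∀ n < N, Yd n = fun ω =>
      (μ[fun ω' => (1 + h * β (X n ω') (u n)) * Yd (n + 1) ω' | F n]) ω
        + h * φ (X n ω) (u n))
    (hZd : ∀ n < N, Zd n = fun ω => (μ[fun ω' => Yd (n + 1) ω' * ΔW n ω' | F n]) ω / h)
    -- sample-wise scheme
    (Ys Zs : ℕ → Ω → ℝ)
    (hYsN : Ys N = fun ω => ψ (X N ω))
    (hYs : ∀ n < N, Ys n = fun ω =>
      (1 + h * β (X n ω) (u n)) * Ys (n + 1) ω + h * φ (X n ω) (u n))
    (hZs : ∀ n < N, Zs n = fun ω => Ys (n + 1) ω * ΔW n ω / h) :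
    (∀ n ≤ N, μ[Ys n | F n] =ᵐ[μ] Yd n) ∧
    (∀ n < N, μ[Zs n | F n] =ᵐ[μ] Zd n) ∧
    (∀ n ≤ N, ∫ ω, Ys n ω ∂μ = ∫ ω, Yd n ω ∂μ) ∧
    (∀ n < N, ∫ ω, Zs n ω ∂μ = ∫ ω, Zd n ω ∂μ) := by
  have hNpos : (0 : ℝ) < (N : ℝ) := by exact_mod_cast Nat.lt_of_lt_of_le Nat.zero_lt_one hN
  have hhpos : 0 < h := by rw [hh]; positivity
  have hFle : ∀ n, F n ≤ mΩ := by
    intro n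
    rw [hF]
    exact iSup_le fun i => iSup_le fun _ => (hmeas i).comap_le
  have hFmono : ∀ {m n : ℕ}, m ≤ n → F m ≤ F n := by
    intro m n hmn
    rw [hF m, hF n]
    exact iSup_le fun i => iSup_le fun hi =>
      le_iSup₂ (f := fun i (_ : i ∈ Finset.range n) =>
        MeasurableSpace.comap (ΔW i) (inferInstance : MeasurableSpace ℝ)) i
        (Finset.mem_range.mpr ((Finset.mem_range.mp hi).trans_le hmn))
  have hcomap_le : ∀ i n, i < n →
      MeasurableSpace.comap (ΔW i) (inferInstance : MeasurableSpace ℝ) ≤ F n := by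
    intro i n hin
    rw [hF]
    exact le_iSup₂ (f := fun i (_ : i ∈ Finset.range n) =>
      MeasurableSpace.comap (ΔW i) (inferInstance : MeasurableSpace ℝ)) i
      (Finset.mem_range.mpr hin)
  have hΔWFm : ∀ i n, i < n → Measurable[F n] (ΔW i) := fun i n hin =>
    measurable_iff_comap_le.mpr (hcomap_le i n hin)
  have hLipCont : ∀ f : ℝ → ℝ, (∀ x y, |f x - f y| ≤ L * |x - y|) → Continuous f := by
    intro f hf
    refine (LipschitzWith.of_dist_le_mul (K := L.toNNReal) fun x y => ?_).continuous
    rw [Real.dist_eq, Real.dist_eq, Real.coe_toNNReal L hL.le]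
    exact hf x y
  have hbc : ∀ c, Continuous fun x => b x c := fun c => hLipCont _ fun x y => by
    simpa using hb x y c c
  have hβc : ∀ c, Continuous fun x => β x c := fun c => hLipCont _ fun x y => by
    simpa using hβ x y c c
  have hφc : ∀ c, Continuous fun x => φ x c := fun c => hLipCont _ fun x y => by
    simpa using hφ x y c c
  have hψc : Continuous ψ := hLipCont _ hψ
  have hXFmeas : ∀ n, Measurable[F n] (X n) := by
    intro n
    induction n with
    | zero => rw [hX0]; exact measurable_const
    | succ n ih =>
      rw [hXrec n]
      have h1 : Measurable[F (n + 1)] (X n) := ih.mono (hFmono (Nat.le_succ n)) le_rfl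
      have h2 : Measurable[F (n + 1)] (ΔW n) := hΔWFm n (n + 1) (Nat.lt_succ_self n)
      exact (h1.add (((hbc (u n)).measurable.comp h1).mul_const h)).add (h2.const_mul (σ (u n)))
  have hXm : ∀ n, Measurable (X n) := fun n => (hXFmeas n).mono (hFle n) le_rfl
  have hΔW2 : ∀ i, i < N → MemLp (ΔW i) 2 μ := by
    intro i hi
    have hg := gaussian_memLp_two (v := Real.toNNReal h)
      (ne_of_gt (Real.toNNReal_pos.mpr hhpos))
    rw [← hlaw ⟨i, hi⟩] at hg
    have := (memLp_map_measure_iff aestronglyMeasurable_id (hmeas i).aemeasurable).1 hg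
    simpa [Function.comp] using this
  have hdom2 : ∀ (f g : Ω → ℝ) (c : ℝ), 0 ≤ c → MemLp f 2 μ → AEStronglyMeasurable g μ →
      (∀ ω, |g ω| ≤ c * (1 + |f ω|)) → MemLp g 2 μ := by
    intro f g c hc hf hgm hbound
    have hmem : MemLp (fun ω => c * (1 + |f ω|)) 2 μ := by
      have h1 : MemLp (fun ω => (1 : ℝ) + |f ω|) 2 μ := (memLp_const (1 : ℝ)).add hf.norm
      exact h1.const_mul c
    refine MemLp.of_le hmem hgm (Filter.Eventually.of_forall fun ω => ?_)
    rw [Real.norm_eq_abs, Real.norm_eq_abs]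
    have h1 : (0 : ℝ) ≤ 1 + |f ω| := by positivity
    rw [abs_of_nonneg (mul_nonneg hc h1)]
    exact hbound ω
  have hX2 : ∀ n, n ≤ N → MemLp (X n) 2 μ := by
    intro n
    induction n with
    | zero => intro _; rw [hX0]; exact memLp_const x₀
    | succ n ih =>
      intro hn
      have hnN : n < N := Nat.lt_of_succ_le hn
      have hx := ih hnN.le
      rw [hXrec n]
      have hbm : MemLp (fun ω => b (X n ω) (u n) * h) 2 μ := by
        refine hdom2 (X n) _ (L * h) (by positivity) hx
          ((((hbc (u n)).measurable.comp (hXm n)).mul_const h)).aestronglyMeasurable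
          fun ω => ?_
        rw [abs_mul, abs_of_pos hhpos]
        calc |b (X n ω) (u n)| * h ≤ L * (1 + |X n ω|) * h :=
              mul_le_mul_of_nonneg_right (hbgrow _ _) hhpos.le
          _ = L * h * (1 + |X n ω|) := by ring
      have hwm : MemLp (fun ω => σ (u n) * ΔW n ω) 2 μ := (hΔW2 n hnN).const_mul _
      exact (hx.add hbm).add hwm
  have key : ∀ k, k ≤ N →
      MemLp (Ys (N - k)) 2 μ ∧ μ[Ys (N - k)|F (N - k)] =ᵐ[μ] Yd (N - k) := by
    intro k
    induction k with
    | zero =>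
      intro _
      simp only [Nat.sub_zero]
      have hsmN : StronglyMeasurable[F N] fun ω => ψ (X N ω) :=
        (hψc.measurable.comp (hXFmeas N)).stronglyMeasurable
      have hmemN : MemLp (Ys N) 2 μ := by
        rw [hYsN]
        exact hdom2 (X N) _ L hL.le (hX2 N le_rfl)
          (hψc.measurable.comp (hXm N)).aestronglyMeasurable fun ω => hψgrow (X N ω)
      have hintN : Integrable (fun ω => ψ (X N ω)) μ := by
        have := hmemN.integrable one_le_two
        rwa [hYsN] at this
      refine ⟨hmemN, ?_⟩
      rw [hYsN, hYdN, condExp_of_stronglyMeasurable (hFle N) hsmN hintN]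
    | succ k ih =>
      intro hk
      have hkN : k ≤ N := Nat.le_of_succ_le hk
      obtain ⟨ihm, ihc⟩ := ih hkN
      set n := N - (k + 1) with hndef
      have hnN : n < N := by omega
      have hs : N - k = n + 1 := by omega
      rw [hs] at ihm ihc
      have hβXm : Measurable[F n] fun ω => β (X n ω) (u n) :=
        (hβc (u n)).measurable.comp (hXFmeas n)
      have hgFm : Measurable[F n] fun ω => 1 + h * β (X n ω) (u n) :=
        measurable_const.add (hβXm.const_mul h)
      have hgm : AEStronglyMeasurable (fun ω => 1 + h * β (X n ω) (u n)) μ :=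
        (hgFm.mono (hFle n) le_rfl).aestronglyMeasurable
      have hgbd : ∀ ω : Ω, ‖1 + h * β (X n ω) (u n)‖ ≤ 1 + h * L := by
        intro ω
        rw [Real.norm_eq_abs]
        calc |1 + h * β (X n ω) (u n)| ≤ |1| + |h * β (X n ω) (u n)| := abs_add_le _ _
          _ = 1 + h * |β (X n ω) (u n)| := by rw [abs_one, abs_mul, abs_of_pos hhpos]
          _ ≤ 1 + h * L := by nlinarith [hβbd (X n ω) (u n)]
      have hYs1i : Integrable (Ys (n + 1)) μ := ihm.integrable one_le_two
      have hPint : Integrable (fun ω => (1 + h * β (X n ω) (u n)) * Ys (n + 1) ω) μ :=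
        Integrable.bdd_mul (c := 1 + h * L) hYs1i hgm (Filter.Eventually.of_forall hgbd)
      have hφsm : StronglyMeasurable[F n] fun ω => h * φ (X n ω) (u n) :=
        (((hφc (u n)).measurable.comp (hXFmeas n)).const_mul h).stronglyMeasurable
      have hφmem : MemLp (fun ω => h * φ (X n ω) (u n)) 2 μ := by
        refine hdom2 (X n) _ (h * L) (by positivity) (hX2 n hnN.le)
          ((((hφc (u n)).measurable.comp (hXm n)).const_mul h)).aestronglyMeasurable
          fun ω => ?_
        rw [abs_mul, abs_of_pos hhpos]
        calc h * |φ (X n ω) (u n)| ≤ h * (L * (1 + |X n ω|)) :=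
              mul_le_mul_of_nonneg_left (hφgrow _ _) hhpos.le
          _ = h * L * (1 + |X n ω|) := by ring
      have hφint : Integrable (fun ω => h * φ (X n ω) (u n)) μ := hφmem.integrable one_le_two
      have hmemn : MemLp (Ys n) 2 μ := by
        rw [hYs n hnN]
        have h1 : MemLp (fun ω => (1 + h * β (X n ω) (u n)) * Ys (n + 1) ω) 2 μ := by
          refine hdom2 (Ys (n + 1)) _ (1 + h * L) (by positivity) ihm
            (hgm.mul ihm.aestronglyMeasurable) fun ω => ?_
          rw [abs_mul]
          have hg1 := hgbd ω
          rw [Real.norm_eq_abs] at hg1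
          nlinarith [abs_nonneg (Ys (n + 1) ω), abs_nonneg (1 + h * β (X n ω) (u n))]
        exact h1.add hφmem
      have hsum : Ys n = (fun ω => (1 + h * β (X n ω) (u n)) * Ys (n + 1) ω)
          + fun ω => h * φ (X n ω) (u n) := by
        rw [hYs n hnN]; rfl
      have hA : μ[Ys n|F n] =ᵐ[μ]
          μ[fun ω => (1 + h * β (X n ω) (u n)) * Ys (n + 1) ω|F n]
            + μ[fun ω => h * φ (X n ω) (u n)|F n] := by
        rw [hsum]; exact condExp_add hPint hφint _
      have hB : μ[fun ω => (1 + h * β (X n ω) (u n)) * Ys (n + 1) ω|F n] =ᵐ[μ]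
          μ[fun ω => (1 + h * β (X n ω) (u n)) * Yd (n + 1) ω|F n] := by
        have e1 : μ[fun ω => (1 + h * β (X n ω) (u n)) * Ys (n + 1) ω|F (n + 1)] =ᵐ[μ]
            fun ω => (1 + h * β (X n ω) (u n)) * Yd (n + 1) ω := by
          have hpull := condExp_mul_of_stronglyMeasurable_left (μ := μ)
            (f := fun ω => 1 + h * β (X n ω) (u n)) (g := Ys (n + 1))
            ((hgFm.mono (hFmono (Nat.le_succ n)) le_rfl).stronglyMeasurable)
            hPint hYs1i
          refine hpull.trans ?_
          exact ihc.mono fun ω hω => by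
            show (1 + h * β (X n ω) (u n)) * (μ[Ys (n + 1)|F (n + 1)]) ω
              = (1 + h * β (X n ω) (u n)) * Yd (n + 1) ω
            rw [hω]
        calc μ[fun ω => (1 + h * β (X n ω) (u n)) * Ys (n + 1) ω|F n]
            =ᵐ[μ] μ[μ[fun ω => (1 + h * β (X n ω) (u n)) * Ys (n + 1) ω|F (n + 1)]|F n] :=
              (condExp_condExp_of_le (hFmono (Nat.le_succ n)) (hFle (n + 1))).symm
          _ =ᵐ[μ] μ[fun ω => (1 + h * β (X n ω) (u n)) * Yd (n + 1) ω|F n] :=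
              condExp_congr_ae e1
      have hC : μ[fun ω => h * φ (X n ω) (u n)|F n] = fun ω => h * φ (X n ω) (u n) :=
        condExp_of_stronglyMeasurable (hFle n) hφsm hφint
      refine ⟨hmemn, ?_⟩
      have hYdn := hYd n hnN
      filter_upwards [hA, hB] with ω hAω hBω
      rw [hYdn]
      show (μ[Ys n|F n]) ω
        = (μ[fun ω' => (1 + h * β (X n ω') (u n)) * Yd (n + 1) ω'|F n]) ω
          + h * φ (X n ω) (u n)
      simp only [Pi.add_apply] at hAω
      rw [hAω, hBω, hC]
  have mainY : ∀ n, n ≤ N → MemLp (Ys n) 2 μ ∧ μ[Ys n|F n] =ᵐ[μ] Yd n := by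
    intro n hn
    have hkey := key (N - n) (Nat.sub_le N n)
    rwa [Nat.sub_sub_self hn] at hkey
  have mainZ : ∀ n, n < N → Integrable (Zs n) μ ∧ μ[Zs n|F n] =ᵐ[μ] Zd n := by
    intro n hnN
    obtain ⟨hm1, hc1⟩ := mainY (n + 1) hnN
    have hΔWm2 : MemLp (ΔW n) 2 μ := hΔW2 n hnN
    have hpqr : (1 : ENNReal) / 1 = 1 / 2 + 1 / 2 := by
      norm_num [one_div, ENNReal.inv_two_add_inv_two]
    have hRint : Integrable (fun ω => ΔW n ω * Ys (n + 1) ω) μ := by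
      have hsm := hm1.smul (r := 1) hΔWm2
      rw [memLp_one_iff_integrable] at hsm
      exact hsm
    have hRint' : Integrable (fun ω => Ys (n + 1) ω * ΔW n ω) μ := by
      have : (fun ω => Ys (n + 1) ω * ΔW n ω) = fun ω => ΔW n ω * Ys (n + 1) ω := by
        funext ω; exact mul_comm _ _
      rw [this]; exact hRint
    have hZseq : Zs n = h⁻¹ • fun ω => Ys (n + 1) ω * ΔW n ω := by
      rw [hZs n hnN]
      funext ω
      simp only [Pi.smul_apply, smul_eq_mul]
      rw [div_eq_inv_mul]
    have hZint : Integrable (Zs n) μ := by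
      rw [hZseq]; exact hRint'.smul h⁻¹
    refine ⟨hZint, ?_⟩
    have hsmulc : μ[Zs n|F n] =ᵐ[μ] h⁻¹ • μ[fun ω => Ys (n + 1) ω * ΔW n ω|F n] := by
      rw [hZseq]; exact condExp_smul h⁻¹ _ _
    have hW1sm : StronglyMeasurable[F (n + 1)] (ΔW n) :=
      (hΔWFm n (n + 1) (Nat.lt_succ_self n)).stronglyMeasurable
    have e1 : μ[fun ω => Ys (n + 1) ω * ΔW n ω|F (n + 1)] =ᵐ[μ]
        fun ω => Yd (n + 1) ω * ΔW n ω := by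
      have hcomm : (fun ω => Ys (n + 1) ω * ΔW n ω) = ΔW n * Ys (n + 1) := by
        funext ω; exact mul_comm _ _
      rw [hcomm]
      have hpull := condExp_mul_of_stronglyMeasurable_left (μ := μ) hW1sm
        (show Integrable (ΔW n * Ys (n + 1)) μ from hRint) (hm1.integrable one_le_two)
      refine hpull.trans ?_
      exact hc1.mono fun ω hω => by
        show ΔW n ω * (μ[Ys (n + 1)|F (n + 1)]) ω = Yd (n + 1) ω * ΔW n ω
        rw [hω, mul_comm]
    have e2 : μ[fun ω => Ys (n + 1) ω * ΔW n ω|F n] =ᵐ[μ]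
        μ[fun ω => Yd (n + 1) ω * ΔW n ω|F n] :=
      ((condExp_condExp_of_le (hFmono (Nat.le_succ n)) (hFle (n + 1))).symm).trans
        (condExp_congr_ae e1)
    have hZdn := hZd n hnN
    filter_upwards [hsmulc, e2] with ω h1ω h2ω
    rw [hZdn]
    show (μ[Zs n|F n]) ω = (μ[fun ω' => Yd (n + 1) ω' * ΔW n ω'|F n]) ω / h
    rw [h1ω]
    simp only [Pi.smul_apply, smul_eq_mul]
    rw [h2ω, div_eq_inv_mul]
  refine ⟨fun n hn => (mainY n hn).2, fun n hn => (mainZ n hn).2, fun n hn => ?_, fun n hn => ?_⟩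
  · calc ∫ ω, Ys n ω ∂μ = ∫ ω, (μ[Ys n|F n]) ω ∂μ :=
        (integral_condExp (hFle n)).symm
      _ = ∫ ω, Yd n ω ∂μ := integral_congr_ae (mainY n hn).2
  · calc ∫ ω, Zs n ω ∂μ = ∫ ω, (μ[Zs n|F n]) ω ∂μ :=
        (integral_condExp (hFle n)).symm
      _ = ∫ ω, Zd n ω ∂μ := integral_congr_ae (mainZ n hn).2
end

section
/- Weighted unbiasedness of the sample-wise scheme (used in the proof of the damped contraction theorem): For every deterministic control u ∈ ℝ^N, every 0 ≤ n ≤ N−1, and every bounded ℱ_n-measurable real random variable A, one has E[A · Y^u_n] = E[A · Y^{N,u}_n] and E[A · Z^u_n] = E[A · Z^{N,u}_n]. -/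
open MeasureTheory ProbabilityTheory

section AuxSamplewise

lemma aux_integrable_mul {α : Type*} {m0 : MeasurableSpace α} {μ : Measure α}
    {f g : α → ℝ} (hf : MemLp f 2 μ) (hg : MemLp g 2 μ) :
    Integrable (fun x => f x * g x) μ := by
  refine Integrable.mono' (hf.integrable_sq.add hg.integrable_sq)
    (hf.aestronglyMeasurable.mul hg.aestronglyMeasurable)
    (Filter.Eventually.of_forall fun x => ?_)
  simp only [Pi.add_apply]
  rw [Real.norm_eq_abs, abs_mul]
  nlinarith [sq_nonneg (|f x| - |g x|), abs_nonneg (f x), abs_nonneg (g x),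
    sq_abs (f x), sq_abs (g x)]

lemma aux_memℒp_of_bound {α : Type*} {m0 : MeasurableSpace α} {μ : Measure α}
    {f g : α → ℝ} {c : ℝ} (hg : MemLp g 2 μ) (hf : AEStronglyMeasurable f μ)
    (hb : ∀ x, |f x| ≤ c * |g x|) : MemLp f 2 μ := by
  refine MemLp.of_le (hg.const_mul c) hf (Filter.Eventually.of_forall fun x => ?_)
  rw [Real.norm_eq_abs, Real.norm_eq_abs, abs_mul]
  exact (hb x).trans (mul_le_mul_of_nonneg_right (le_abs_self c) (abs_nonneg _))

lemma aux_lip_meas {L : ℝ} (hL : 0 ≤ L) {f : ℝ → ℝ}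
    (hf : ∀ x y, |f x - f y| ≤ L * |x - y|) : Measurable f :=
  (LipschitzWith.of_dist_le_mul (K := Real.toNNReal L) fun x y => by
    rw [Real.dist_eq, Real.dist_eq, Real.coe_toNNReal L hL]; exact hf x y)
    |>.continuous.measurable

lemma aux_memℒp_condexp {α : Type*} {m m0 : MeasurableSpace α} (hm : m ≤ m0)
    {μ : Measure α} [IsFiniteMeasure μ] {f : α → ℝ} (hf : MemLp f 2 μ) :
    MemLp (μ[f|m]) 2 μ := by
  set g : Lp ℝ 2 μ := (condExpL2 ℝ ℝ hm (hf.toLp f) : Lp ℝ 2 μ) with hg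
  have hge : ⇑g =ᵐ[μ] μ[f|m] := by
    refine ae_eq_condExp_of_forall_setIntegral_eq hm (hf.integrable one_le_two)
      (fun s _ _ => ((Lp.memLp g).integrable one_le_two).integrableOn)
      (fun s hs hμs => ?_) (aestronglyMeasurable_condExpL2 hm _)
    rw [hg]
    rw [integral_condExpL2_eq hm (hf.toLp f) hs hμs.ne]
    exact setIntegral_congr_ae (hm s hs) ((hf.coeFn_toLp).mono fun x hx _ => hx)
  exact (Lp.memLp g).ae_eq hge

lemma aux_sq_gaussian {v : NNReal} (hv : v ≠ 0) :
    Integrable (fun x : ℝ => x ^ 2) (gaussianReal 0 v) := by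
  have hv0 : (0 : ℝ) < (v : ℝ) := by
    exact_mod_cast pos_iff_ne_zero.mpr hv
  rw [gaussianReal_of_var_ne_zero 0 hv,
    integrable_withDensity_iff (measurable_gaussianPDF 0 v)
      (Filter.Eventually.of_forall fun x => ENNReal.ofReal_lt_top)]
  have heq : (fun x : ℝ => x ^ 2 * (gaussianPDF 0 v x).toReal)
      = fun x => (Real.sqrt (2 * Real.pi * v))⁻¹
          * (x ^ 2 * Real.exp (-(2 * (v : ℝ))⁻¹ * x ^ 2)) := by
    funext x
    rw [gaussianPDF, ENNReal.toReal_ofReal (gaussianPDFReal_nonneg _ _ _), gaussianPDFReal]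
    have harg : -(x - 0) ^ 2 / (2 * (v : ℝ)) = -(2 * (v : ℝ))⁻¹ * x ^ 2 := by
      field_simp
      ring
    rw [harg]; ring
  rw [heq]
  refine Integrable.const_mul ?_ _
  have hb : (0 : ℝ) < (2 * (v : ℝ))⁻¹ := inv_pos.mpr (by linarith)
  have h2 := integrable_rpow_mul_exp_neg_mul_sq hb (s := 2) (by norm_num)
  simpa only [show ((2 : ℝ)) = ((2 : ℕ) : ℝ) by norm_num, Real.rpow_natCast] using h2

end AuxSamplewise

/-- Weighted unbiasedness of the sample-wise scheme: for every `0 ≤ n ≤ N-1` and every bounded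
`ℱ_n`-measurable random variable `A`, `E[A · Y^u_n] = E[A · Y^{N,u}_n]` and
`E[A · Z^u_n] = E[A · Z^{N,u}_n]`. -/
theorem samplewise_scheme_weighted_unbiased
    {Ω : Type*} {mΩ : MeasurableSpace Ω} (μ : Measure Ω) [IsProbabilityMeasure μ]
    (T L : ℝ) (hT : 0 < T) (hL : 0 < L)
    (N : ℕ) (hN : 1 ≤ N) (h : ℝ) (hh : h = T / N)
    (ΔW : ℕ → Ω → ℝ)
    (hmeas : ∀ i, Measurable (ΔW i))
    (hindep : iIndepFun (fun i : Fin N => ΔW i) μ)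
    (hlaw : ∀ i : Fin N, Measure.map (ΔW i) μ = gaussianReal 0 (Real.toNNReal h))
    (F : ℕ → MeasurableSpace Ω)
    (hF : ∀ n, F n = ⨆ i ∈ Finset.range n,
      MeasurableSpace.comap (ΔW i) (inferInstance : MeasurableSpace ℝ))
    (b : ℝ → ℝ → ℝ)
    (hb : ∀ x y u v : ℝ, |b x u - b y v| ≤ L * (|x - y| + |u - v|))
    (σ : ℝ → ℝ)
    (hσ : ∀ u v : ℝ, |σ u - σ v| ≤ L * |u - v|)
    (β φ : ℝ → ℝ → ℝ) (ψ : ℝ → ℝ)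
    (hβ : ∀ x y u v : ℝ, |β x u - β y v| ≤ L * (|x - y| + |u - v|))
    (hφ : ∀ x y u v : ℝ, |φ x u - φ y v| ≤ L * (|x - y| + |u - v|))
    (hψ : ∀ x y : ℝ, |ψ x - ψ y| ≤ L * |x - y|)
    (hβbd : ∀ x u : ℝ, |β x u| ≤ L)
    (hbgrow : ∀ x u : ℝ, |b x u| ≤ L * (1 + |x|))
    (hφgrow : ∀ x u : ℝ, |φ x u| ≤ L * (1 + |x|))
    (hψgrow : ∀ x : ℝ, |ψ x| ≤ L * (1 + |x|))
    (x₀ : ℝ) (u : ℕ → ℝ) (X : ℕ → Ω → ℝ)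
    (hX0 : X 0 = fun _ => x₀)
    (hXrec : ∀ n, X (n + 1) = fun ω => X n ω + b (X n ω) (u n) * h + σ (u n) * ΔW n ω)
    -- discrete BSDE scheme
    (Yd Zd : ℕ → Ω → ℝ)
    (hYdN : Yd N = fun ω => ψ (X N ω))
    (hYd : ∀ n < N, Yd n = fun ω =>
      (μ[fun ω' => (1 + h * β (X n ω') (u n)) * Yd (n + 1) ω' | F n]) ω
        + h * φ (X n ω) (u n))
    (hZd : ∀ n < N, Zd n = fun ω => (μ[fun ω' => Yd (n + 1) ω' * ΔW n ω' | F n]) ω / h)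
    -- sample-wise scheme
    (Ys Zs : ℕ → Ω → ℝ)
    (hYsN : Ys N = fun ω => ψ (X N ω))
    (hYs : ∀ n < N, Ys n = fun ω =>
      (1 + h * β (X n ω) (u n)) * Ys (n + 1) ω + h * φ (X n ω) (u n))
    (hZs : ∀ n < N, Zs n = fun ω => Ys (n + 1) ω * ΔW n ω / h) :
    ∀ n < N, ∀ A : Ω → ℝ, Measurable[F n] A → (∃ c : ℝ, ∀ ω, |A ω| ≤ c) →
      (∫ ω, A ω * Ys n ω ∂μ = ∫ ω, A ω * Yd n ω ∂μ) ∧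
      (∫ ω, A ω * Zs n ω ∂μ = ∫ ω, A ω * Zd n ω ∂μ) := by
  have hh0 : 0 < h := by
    rw [hh]; exact div_pos hT (by exact_mod_cast Nat.pos_of_ne_zero (by omega))
  have hFle : ∀ n, F n ≤ mΩ := by
    intro n
    rw [hF n]
    exact iSup_le fun i => iSup_le fun _ => (hmeas i).comap_le
  have hFmono : ∀ {n m : ℕ}, n ≤ m → F n ≤ F m := by
    intro n m hnm
    rw [hF n, hF m]
    refine iSup_le fun i => iSup_le fun hi => ?_
    exact le_iSup₂ (f := fun i (_ : i ∈ Finset.range m) =>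
      MeasurableSpace.comap (ΔW i) (inferInstance : MeasurableSpace ℝ)) i
      (Finset.mem_range.mpr (lt_of_lt_of_le (Finset.mem_range.mp hi) hnm))
  have hΔWF : ∀ i, Measurable[F (i + 1)] (ΔW i) := by
    intro i
    rw [measurable_iff_comap_le, hF (i + 1)]
    exact le_iSup₂ (f := fun j (_ : j ∈ Finset.range (i + 1)) =>
      MeasurableSpace.comap (ΔW j) (inferInstance : MeasurableSpace ℝ)) i
      (Finset.mem_range.mpr (Nat.lt_succ_self i))
  have hmb : ∀ n : ℕ, Measurable fun x => b x (u n) := fun n =>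
    aux_lip_meas hL.le fun x y => by simpa using hb x y (u n) (u n)
  have hmβ : ∀ n : ℕ, Measurable fun x => β x (u n) := fun n =>
    aux_lip_meas hL.le fun x y => by simpa using hβ x y (u n) (u n)
  have hmφ : ∀ n : ℕ, Measurable fun x => φ x (u n) := fun n =>
    aux_lip_meas hL.le fun x y => by simpa using hφ x y (u n) (u n)
  have hmψ : Measurable ψ := aux_lip_meas hL.le hψ
  have hXF : ∀ n, Measurable[F n] (X n) := by
    intro n
    induction n with
    | zero => rw [hX0]; exact measurable_const
    | succ n ih =>
      rw [hXrec n]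
      exact ((ih.mono (hFmono n.le_succ) le_rfl).add
        (((hmb n).comp (ih.mono (hFmono n.le_succ) le_rfl)).mul_const h)).add
        ((hΔWF n).const_mul (σ (u n)))
  have hXm : ∀ n, Measurable (X n) := fun n => (hXF n).mono (hFle n) le_rfl
  have hW2 : ∀ i, i < N → MemLp (ΔW i) 2 μ := by
    intro i hi
    have hv : Real.toNNReal h ≠ 0 := by
      simpa using (Real.toNNReal_pos.mpr hh0).ne'
    have hsq : Integrable (fun x : ℝ => x ^ 2) (Measure.map (ΔW i) μ) := by
      rw [hlaw ⟨i, hi⟩]; exact aux_sq_gaussian hv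
    have hint : Integrable (fun ω => ΔW i ω ^ 2) μ := by
      have := (integrable_map_measure
        (f := ΔW i) (g := fun x : ℝ => x ^ 2)
        ((measurable_id.pow_const 2).aestronglyMeasurable)
        (hmeas i).aemeasurable).mp hsq
      exact this
    exact (memLp_two_iff_integrable_sq (hmeas i).aestronglyMeasurable).mpr hint
  have honeX : ∀ n, n ≤ N → MemLp (fun ω => 1 + |X n ω|) 2 μ → True := fun _ _ _ => trivial
  have hX2 : ∀ n, n ≤ N → MemLp (X n) 2 μ := by
    intro n hn
    induction n with
    | zero => rw [hX0]; exact memLp_const x₀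
    | succ n ih =>
      have ihn := ih (le_trans (Nat.le_succ n) hn)
      rw [hXrec n]
      have hgn : MemLp (fun ω => 1 + |X n ω|) 2 μ :=
        (memLp_const 1).add (g := fun ω => |X n ω|) (by simpa [Real.norm_eq_abs] using ihn.norm)
      have h1 : MemLp (fun ω => b (X n ω) (u n) * h) 2 μ := by
        refine aux_memℒp_of_bound (c := L * h) hgn
          (((hmb n).comp (hXm n)).mul_const h).aestronglyMeasurable fun ω => ?_
        have hbb := hbgrow (X n ω) (u n)
        have hx : abs (1 + |X n ω|) = 1 + |X n ω| := abs_of_pos (by positivity)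
        rw [abs_mul, abs_of_pos hh0, hx]
        nlinarith [abs_nonneg (b (X n ω) (u n)), abs_nonneg (X n ω)]
      have h2 : MemLp (fun ω => σ (u n) * ΔW n ω) 2 μ :=
        (hW2 n (by omega)).const_mul (σ (u n))
      exact (ihn.add h1).add h2
  have hgrow2 : ∀ n, n ≤ N → MemLp (fun ω => 1 + |X n ω|) 2 μ := fun n hn =>
    (memLp_const 1).add (g := fun ω => |X n ω|) (by simpa [Real.norm_eq_abs] using (hX2 n hn).norm)
  have hφ2 : ∀ n, n ≤ N → MemLp (fun ω => φ (X n ω) (u n)) 2 μ := by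
    intro n hn
    refine aux_memℒp_of_bound (c := L) (hgrow2 n hn)
      ((hmφ n).comp (hXm n)).aestronglyMeasurable fun ω => ?_
    have hx : abs (1 + |X n ω|) = 1 + |X n ω| := abs_of_pos (by positivity)
    rw [hx]
    exact hφgrow (X n ω) (u n)
  have hψ2 : MemLp (fun ω => ψ (X N ω)) 2 μ := by
    refine aux_memℒp_of_bound (c := L) (hgrow2 N le_rfl)
      (hmψ.comp (hXm N)).aestronglyMeasurable fun ω => ?_
    have hx : abs (1 + |X N ω|) = 1 + |X N ω| := abs_of_pos (by positivity)
    rw [hx]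
    exact hψgrow (X N ω)
  have hBbd : ∀ n ω, |1 + h * β (X n ω) (u n)| ≤ 1 + h * L := by
    intro n ω
    have h1 : |1 + h * β (X n ω) (u n)| ≤ |(1 : ℝ)| + |h * β (X n ω) (u n)| := abs_add_le _ _
    have h2 : |h * β (X n ω) (u n)| ≤ h * L := by
      rw [abs_mul, abs_of_pos hh0]
      exact mul_le_mul_of_nonneg_left (hβbd (X n ω) (u n)) hh0.le
    calc |1 + h * β (X n ω) (u n)| ≤ |(1 : ℝ)| + |h * β (X n ω) (u n)| := abs_add_le _ _
      _ = 1 + |h * β (X n ω) (u n)| := by rw [abs_one]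
      _ ≤ 1 + h * L := by linarith
  have hBpos : (0 : ℝ) < 1 + h * L := by nlinarith
  -- measurability and second moments of Ys
  have hYs2 : ∀ k n, n + k = N → Measurable (Ys n) ∧ MemLp (Ys n) 2 μ := by
    intro k
    induction k with
    | zero =>
      intro n hn
      have hnN : n = N := by omega
      rw [hnN, hYsN]
      exact ⟨hmψ.comp (hXm N), hψ2⟩
    | succ k ih =>
      intro n hn
      have hnN : n < N := by omega
      obtain ⟨ihm, ih2⟩ := ih (n + 1) (by omega)
      rw [hYs n hnN]
      refine ⟨((measurable_const.add (((hmβ n).comp (hXm n)).const_mul h)).mul ihm).add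
        (((hmφ n).comp (hXm n)).const_mul h), ?_⟩
      have hmul : MemLp (fun ω => (1 + h * β (X n ω) (u n)) * Ys (n + 1) ω) 2 μ := by
        refine aux_memℒp_of_bound (c := 1 + h * L) ih2
          ((measurable_const.add (((hmβ n).comp (hXm n)).const_mul h)).mul
            ihm).aestronglyMeasurable fun ω => ?_
        rw [abs_mul]
        exact mul_le_mul_of_nonneg_right (hBbd n ω) (abs_nonneg _)
      exact hmul.add ((hφ2 n hnN.le).const_mul h)
  -- measurability and second moments of Yd
  have hYd2 : ∀ k n, n + k = N → AEStronglyMeasurable (Yd n) μ ∧ MemLp (Yd n) 2 μ := by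
    intro k
    induction k with
    | zero =>
      intro n hn
      have hnN : n = N := by omega
      rw [hnN, hYdN]
      exact ⟨(hmψ.comp (hXm N)).aestronglyMeasurable, hψ2⟩
    | succ k ih =>
      intro n hn
      have hnN : n < N := by omega
      obtain ⟨ihm, ih2⟩ := ih (n + 1) (by omega)
      have hG2 : MemLp (fun ω' => (1 + h * β (X n ω') (u n)) * Yd (n + 1) ω') 2 μ := by
        refine aux_memℒp_of_bound (c := 1 + h * L) ih2
          (((measurable_const.add (((hmβ n).comp (hXm n)).const_mul
            h)).aestronglyMeasurable).mul ihm) fun ω => ?_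
        rw [abs_mul]
        exact mul_le_mul_of_nonneg_right (hBbd n ω) (abs_nonneg _)
      rw [hYd n hnN]
      exact ⟨((stronglyMeasurable_condExp.mono (hFle n)).aestronglyMeasurable).add
          ((((hmφ n).comp (hXm n)).const_mul h).aestronglyMeasurable),
        (aux_memℒp_condexp (hFle n) hG2).add ((hφ2 n hnN.le).const_mul h)⟩
  -- key weighted identity, by downward induction
  have key : ∀ k n, n + k = N → ∀ A : Ω → ℝ, Measurable[F n] A → MemLp A 2 μ →
      ∫ ω, A ω * Ys n ω ∂μ = ∫ ω, A ω * Yd n ω ∂μ := by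
    intro k
    induction k with
    | zero =>
      intro n hn A _ _
      have hnN : n = N := by omega
      rw [hnN, hYsN, hYdN]
    | succ k ih =>
      intro n hn A hAF hA2
      have hnN : n < N := by omega
      have hA : Measurable A := hAF.mono (hFle n) le_rfl
      have hBmF : Measurable[F n] fun ω => 1 + h * β (X n ω) (u n) :=
        measurable_const.add (((hmβ n).comp (hXF n)).const_mul h)
      have hBm : Measurable fun ω => 1 + h * β (X n ω) (u n) := hBmF.mono (hFle n) le_rfl
      obtain ⟨hYsm', hYs2'⟩ := hYs2 k (n + 1) (by omega)
      obtain ⟨hYdm', hYd2'⟩ := hYd2 k (n + 1) (by omega)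
      have hφn2 : MemLp (fun ω => h * φ (X n ω) (u n)) 2 μ := (hφ2 n hnN.le).const_mul h
      -- the modified weight A'
      have hA'F : Measurable[F (n + 1)] fun ω => A ω * (1 + h * β (X n ω) (u n)) :=
        (hAF.mono (hFmono n.le_succ) le_rfl).mul (hBmF.mono (hFmono n.le_succ) le_rfl)
      have hA'2 : MemLp (fun ω => A ω * (1 + h * β (X n ω) (u n))) 2 μ := by
        refine aux_memℒp_of_bound (c := 1 + h * L) hA2
          (hA.mul hBm).aestronglyMeasurable fun ω => ?_
        rw [abs_mul, mul_comm (|A ω|)]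
        exact mul_le_mul_of_nonneg_right (hBbd n ω) (abs_nonneg _)
      -- G := (1 + h β) * Yd (n+1)
      have hG2 : MemLp (fun ω' => (1 + h * β (X n ω') (u n)) * Yd (n + 1) ω') 2 μ := by
        refine aux_memℒp_of_bound (c := 1 + h * L) hYd2'
          ((hBm.aestronglyMeasurable).mul hYdm') fun ω => ?_
        rw [abs_mul]
        exact mul_le_mul_of_nonneg_right (hBbd n ω) (abs_nonneg _)
      -- integrability facts
      have hI1 : Integrable (fun ω => (A ω * (1 + h * β (X n ω) (u n))) * Ys (n + 1) ω) μ :=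
        aux_integrable_mul hA'2 hYs2'
      have hI2 : Integrable (fun ω => A ω * (h * φ (X n ω) (u n))) μ :=
        aux_integrable_mul hA2 hφn2
      have hI3 : Integrable (fun ω =>
          A ω * (μ[fun ω' => (1 + h * β (X n ω') (u n)) * Yd (n + 1) ω'|F n]) ω) μ :=
        aux_integrable_mul hA2 (aux_memℒp_condexp (hFle n) hG2)
      have hI4 : Integrable (fun ω =>
          A ω * ((1 + h * β (X n ω) (u n)) * Yd (n + 1) ω)) μ := by
        have := aux_integrable_mul hA'2 hYd2'
        refine this.congr (Filter.Eventually.of_forall fun ω => ?_)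
        ring
      -- LHS
      have hLHS : ∫ ω, A ω * Ys n ω ∂μ
          = (∫ ω, (A ω * (1 + h * β (X n ω) (u n))) * Ys (n + 1) ω ∂μ)
            + ∫ ω, A ω * (h * φ (X n ω) (u n)) ∂μ := by
        rw [hYs n hnN]
        rw [show (fun ω => A ω * ((1 + h * β (X n ω) (u n)) * Ys (n + 1) ω
            + h * φ (X n ω) (u n)))
          = fun ω => (A ω * (1 + h * β (X n ω) (u n))) * Ys (n + 1) ω
            + A ω * (h * φ (X n ω) (u n)) from funext fun ω => by ring]
        exact integral_add hI1 hI2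
      -- RHS
      have hRHS : ∫ ω, A ω * Yd n ω ∂μ
          = (∫ ω, A ω * (μ[fun ω' =>
              (1 + h * β (X n ω') (u n)) * Yd (n + 1) ω'|F n]) ω ∂μ)
            + ∫ ω, A ω * (h * φ (X n ω) (u n)) ∂μ := by
        rw [hYd n hnN]
        rw [show (fun ω => A ω * ((μ[fun ω' =>
              (1 + h * β (X n ω') (u n)) * Yd (n + 1) ω'|F n]) ω + h * φ (X n ω) (u n)))
          = fun ω => A ω * (μ[fun ω' =>
              (1 + h * β (X n ω') (u n)) * Yd (n + 1) ω'|F n]) ω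
            + A ω * (h * φ (X n ω) (u n)) from funext fun ω => by ring]
        exact integral_add hI3 hI2
      -- pull out the conditional expectation
      have hpull : ∫ ω, A ω * (μ[fun ω' =>
            (1 + h * β (X n ω') (u n)) * Yd (n + 1) ω'|F n]) ω ∂μ
          = ∫ ω, A ω * ((1 + h * β (X n ω) (u n)) * Yd (n + 1) ω) ∂μ := by
        have hsm : StronglyMeasurable[F n] A := hAF.stronglyMeasurable
        have hmul := condExp_mul_of_stronglyMeasurable_left (μ := μ) (m := F n) hsm
          (by
            have := hI4
            exact this)
          (hG2.integrable one_le_two)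
        calc ∫ ω, A ω * (μ[fun ω' =>
              (1 + h * β (X n ω') (u n)) * Yd (n + 1) ω'|F n]) ω ∂μ
            = ∫ ω, (μ[A * fun ω' =>
              (1 + h * β (X n ω') (u n)) * Yd (n + 1) ω'|F n]) ω ∂μ := by
              refine integral_congr_ae ?_
              filter_upwards [hmul] with ω hω
              rw [hω]; simp [Pi.mul_apply]
          _ = ∫ ω, (A * fun ω' =>
              (1 + h * β (X n ω') (u n)) * Yd (n + 1) ω') ω ∂μ :=
              integral_condExp (hFle n)
          _ = ∫ ω, A ω * ((1 + h * β (X n ω) (u n)) * Yd (n + 1) ω) ∂μ := by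
              simp [Pi.mul_apply]
      -- induction hypothesis with the modified weight
      have hih := ih (n + 1) (by omega) (fun ω => A ω * (1 + h * β (X n ω) (u n))) hA'F hA'2
      have hIH' : ∫ ω, (A ω * (1 + h * β (X n ω) (u n))) * Ys (n + 1) ω ∂μ
          = ∫ ω, A ω * ((1 + h * β (X n ω) (u n)) * Yd (n + 1) ω) ∂μ := by
        rw [hih]
        refine integral_congr_ae (Filter.Eventually.of_forall fun ω => ?_)
        ring
      rw [hLHS, hRHS, hpull, hIH']
  -- conclude
  intro n hn A hAF hAbd
  obtain ⟨c, hc⟩ := hAbd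
  have hA : Measurable A := hAF.mono (hFle n) le_rfl
  have hA2 : MemLp A 2 μ := by
    refine aux_memℒp_of_bound (c := c) (memLp_const 1) hA.aestronglyMeasurable fun ω => ?_
    simpa using hc ω
  constructor
  · exact key (N - n) n (by omega) A hAF hA2
  · -- Z part
    obtain ⟨hYsm', hYs2'⟩ := hYs2 (N - (n + 1)) (n + 1) (by omega)
    obtain ⟨hYdm', hYd2'⟩ := hYd2 (N - (n + 1)) (n + 1) (by omega)
    have hWn2 : MemLp (ΔW n) 2 μ := hW2 n hn
    -- the weight A · ΔW n
    have hA''F : Measurable[F (n + 1)] fun ω => A ω * ΔW n ω :=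
      (hAF.mono (hFmono n.le_succ) le_rfl).mul (hΔWF n)
    have hA''2 : MemLp (fun ω => A ω * ΔW n ω) 2 μ := by
      refine aux_memℒp_of_bound (c := c) hWn2
        (hA.mul (hmeas n)).aestronglyMeasurable fun ω => ?_
      rw [abs_mul]
      exact mul_le_mul_of_nonneg_right (hc ω) (abs_nonneg _)
    have hkey := key (N - (n + 1)) (n + 1) (by omega) (fun ω => A ω * ΔW n ω) hA''F hA''2
    -- integrability of G' = Yd (n+1) * ΔW n
    have hG'int : Integrable (fun ω => Yd (n + 1) ω * ΔW n ω) μ :=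
      aux_integrable_mul hYd2' hWn2
    have hAG'int : Integrable (fun ω => A ω * (Yd (n + 1) ω * ΔW n ω)) μ := by
      refine hG'int.bdd_mul (c := |c|) hA.aestronglyMeasurable
        (Filter.Eventually.of_forall fun ω => (hc ω).trans (le_abs_self c))
    -- LHS of the Z identity
    have hZL : ∫ ω, A ω * Zs n ω ∂μ
        = (∫ ω, (A ω * ΔW n ω) * Ys (n + 1) ω ∂μ) / h := by
      rw [hZs n hn]
      rw [show (fun ω => A ω * (Ys (n + 1) ω * ΔW n ω / h))
        = fun ω => ((A ω * ΔW n ω) * Ys (n + 1) ω) / h from funext fun ω => by ring]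
      exact integral_div h _
    -- RHS of the Z identity
    have hZR : ∫ ω, A ω * Zd n ω ∂μ
        = (∫ ω, (A ω * ΔW n ω) * Yd (n + 1) ω ∂μ) / h := by
      rw [hZd n hn]
      rw [show (fun ω => A ω * ((μ[fun ω' => Yd (n + 1) ω' * ΔW n ω'|F n]) ω / h))
        = fun ω => (A ω * (μ[fun ω' => Yd (n + 1) ω' * ΔW n ω'|F n]) ω) / h
        from funext fun ω => by ring]
      rw [integral_div]
      congr 1
      have hsm : StronglyMeasurable[F n] A := hAF.stronglyMeasurable
      have hmul := condExp_mul_of_stronglyMeasurable_left (μ := μ) (m := F n) hsm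
        (by exact hAG'int) hG'int
      calc ∫ ω, A ω * (μ[fun ω' => Yd (n + 1) ω' * ΔW n ω'|F n]) ω ∂μ
          = ∫ ω, (μ[A * fun ω' => Yd (n + 1) ω' * ΔW n ω'|F n]) ω ∂μ := by
            refine integral_congr_ae ?_
            filter_upwards [hmul] with ω hω
            rw [hω]; simp [Pi.mul_apply]
        _ = ∫ ω, (A * fun ω' => Yd (n + 1) ω' * ΔW n ω') ω ∂μ := integral_condExp (hFle n)
        _ = ∫ ω, (A ω * ΔW n ω) * Yd (n + 1) ω ∂μ := by
            refine integral_congr_ae (Filter.Eventually.of_forall fun ω => ?_)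
            simp only [Pi.mul_apply]
            ring
    rw [hZL, hZR, hkey]
end

section
/- Rate lemma for the stochastic-gradient-descent recursion (the sequence estimate concluding the proof of Theorem standard_new): Let c > 1, M ≥ c, A ≥ 0, B ≥ 0, and let (e_k)_{k ≥ 0} be nonnegative real numbers satisfying e_{k+1} ≤ (1 − c/(k + M)) e_k + A/(k + M)² + B/(k + M) for all k ≥ 0. Then there exists a constant C > 0, depending only on c, such that for all K ≥ 1, e_K ≤ (M/(K + M))^c e_0 + C (A/(K + M) + B). -/
/-- Rate lemma for the stochastic-gradient-descent recursion: if `c > 1`, `M ≥ c`, and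
`e_{k+1} ≤ (1 - c/(k+M)) e_k + A/(k+M)² + B/(k+M)`, then there is a constant `C > 0`
depending only on `c` such that `e_K ≤ (M/(K+M))^c e_0 + C (A/(K+M) + B)` for all `K ≥ 1`. -/
theorem sgd_rate_lemma (c : ℝ) (hc : 1 < c) :
    ∃ C > 0, ∀ (M A B : ℝ), c ≤ M → 0 ≤ A → 0 ≤ B →
      ∀ e : ℕ → ℝ, (∀ k, 0 ≤ e k) →
      (∀ k : ℕ, e (k + 1) ≤ (1 - c / ((k : ℝ) + M)) * e k
        + A / ((k : ℝ) + M) ^ 2 + B / ((k : ℝ) + M)) →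
      ∀ K : ℕ, 1 ≤ K →
        e K ≤ (M / ((K : ℝ) + M)) ^ c * e 0 + C * (A / ((K : ℝ) + M) + B) := by
  have hc1 : (0:ℝ) < c - 1 := by linarith
  refine ⟨1 / (c - 1), by positivity, ?_⟩
  intro M A B hM hA hB e he hrec
  have hM0 : (0:ℝ) < M := by linarith
  have key : ∀ K : ℕ,
      e K ≤ (M / ((K : ℝ) + M)) ^ c * e 0 + (1 / (c - 1)) * (A / ((K : ℝ) + M) + B) := by
    intro K
    induction K with
    | zero =>
      have : (M / ((0 : ℕ) + M : ℝ)) ^ c = 1 := by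
        push_cast
        rw [zero_add, div_self (ne_of_gt hM0), Real.one_rpow]
      rw [this]
      have h1 : 0 ≤ (1 / (c - 1)) * (A / ((0 : ℕ) + M : ℝ) + B) := by
        push_cast
        rw [zero_add]
        positivity
      linarith [h1]
    | succ K ih =>
      set t : ℝ := (K : ℝ) + M with ht_def
      have htc : c ≤ t := by
        have : (0:ℝ) ≤ (K:ℝ) := Nat.cast_nonneg K
        simp only [ht_def]; linarith
      have ht0 : (0:ℝ) < t := by linarith
      have ht1 : (0:ℝ) < t + 1 := by linarith
      have hfac : 0 ≤ 1 - c / t := by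
        rw [sub_nonneg, div_le_one ht0]; exact htc
      have hcast : ((K + 1 : ℕ) : ℝ) + M = t + 1 := by push_cast; ring
      -- step 1: decay of the rpow term
      have h1 : (1 - c / t) * (M / t) ^ c ≤ (M / (t + 1)) ^ c := by
        have hbern : 1 - c / (t + 1) ≤ (t / (t + 1)) ^ c := by
          have hs : (-1 : ℝ) ≤ -(1 / (t + 1)) := by
            rw [neg_le_neg_iff]
            rw [div_le_one ht1]; linarith
          have := one_add_mul_self_le_rpow_one_add hs (le_of_lt hc)
          have heq : (1 : ℝ) + -(1 / (t + 1)) = t / (t + 1) := by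
            field_simp
            ring
          rw [heq] at this
          calc 1 - c / (t + 1) = 1 + c * -(1 / (t + 1)) := by ring
            _ ≤ (t / (t + 1)) ^ c := this
        have hstep : 1 - c / t ≤ (t / (t + 1)) ^ c := by
          have : c / (t + 1) ≤ c / t := by
            apply div_le_div_of_nonneg_left (by linarith) ht0 (by linarith)
          linarith
        have hsplit : (M / (t + 1)) ^ c = (M / t) ^ c * (t / (t + 1)) ^ c := by
          rw [← Real.mul_rpow (by positivity) (by positivity)]
          congr 1
          field_simp
        rw [hsplit, mul_comm ((M / t) ^ c) _]
        exact mul_le_mul_of_nonneg_right hstep (by positivity)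
      -- step 2: A-term
      have h2 : (1 - c / t) * ((1 / (c - 1)) * (A / t)) + A / t ^ 2
          ≤ (1 / (c - 1)) * (A / (t + 1)) := by
        have heq : (1 / (c - 1)) * (A / (t + 1))
            - ((1 - c / t) * ((1 / (c - 1)) * (A / t)) + A / t ^ 2)
            = A / ((c - 1) * t ^ 2 * (t + 1)) := by
          field_simp
          ring
        have hpos : 0 ≤ A / ((c - 1) * t ^ 2 * (t + 1)) := by positivity
        linarith
      -- step 3: B-term
      have h3 : (1 - c / t) * ((1 / (c - 1)) * B) + B / t ≤ (1 / (c - 1)) * B := by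
        have heq : (1 / (c - 1)) * B - ((1 - c / t) * ((1 / (c - 1)) * B) + B / t)
            = B / ((c - 1) * t) := by
          field_simp
          ring
        have hpos : 0 ≤ B / ((c - 1) * t) := by positivity
        linarith
      -- combine
      rw [hcast]
      have hIH := mul_le_mul_of_nonneg_left ih hfac
      have hpow := mul_le_mul_of_nonneg_right h1 (he 0)
      have hr := hrec K
      nlinarith [hIH, hpow, hr, h2, h3]
  intro K _
  exact key K
end

section
/- Abstract convergence of batch stochastic gradient descent with a biased gradient oracle (the convergence argument of Theorem standard_new): Let H be a real Hilbert space and J : H → ℝ Fréchet differentiable with gradient ∇J satisfying, for some λ > 0 and C_L > 0: ⟨∇J(v) − ∇J(w), v − w⟩ ≥ λ‖v − w‖² and ‖∇J(v) − ∇J(w)‖ ≤ C_L‖v − w‖ for all v, w ∈ H, and let u* ∈ H satisfy ∇J(u*) = 0. Let ε ≥ 0 and let G : H → H satisfy ‖G(u) − ∇J(u)‖ ≤ ε for all u ∈ H. On a probability space (Ω, ℱ, ℙ) with a filtration (𝒢_k)_{k ≥ 0} such that 𝒢_0 is trivial, let (g_k)_{k ≥ 0} be H-valued square-integrable random variables with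 g_k measurable with respect to 𝒢_{k+1}, and define u^0 ∈ H deterministic and u^{k+1} = u^k − η_k g_k, where η_k = θ/(k + M) with θ > 0 and M ≥ 1 chosen so that λθ − 4 C_L θ²/(1 + M) > 2 and θ λ/M ≤ 1. Assume that for every k, almost surely E[g_k | 𝒢_k] = G(u^k) and E[‖g_k − G(u^k)‖² | 𝒢_k] ≤ V for a constant V ≥ 0 (note u^k is 𝒢_k-measurable). Then there exists a constant C > 0, depending only on λ, C_L, θ, M, V and ‖u^0 − u*‖, such that for all K ≥ 1, E[‖u^K − u*‖²] ≤ C (1/K + ε²). -/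
open MeasureTheory ProbabilityTheory RealInnerProductSpace

section Aux

variable {H : Type} [NormedAddCommGroup H] [InnerProductSpace ℝ H] [CompleteSpace H]
variable {Ω : Type} {m m0 : MeasurableSpace Ω} {μ : Measure Ω}

omit [CompleteSpace H] in
lemma memLp2_integrable_inner {f g : Ω → H} (hf : MemLp f 2 μ) (hg : MemLp g 2 μ) :
    Integrable (fun ω => ⟪f ω, g ω⟫) μ := by
  have h := L2.integrable_inner (𝕜 := ℝ) (hf.toLp f) (hg.toLp g)
  apply h.congr
  filter_upwards [hf.coeFn_toLp, hg.coeFn_toLp] with ω h1 h2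
  rw [h1, h2]

lemma integral_inner_eq_zero_of_condexp_eq_zero (hm : m ≤ m0) [IsFiniteMeasure μ]
    {h X : Ω → H} (hh : MemLp h 2 μ) (hX : MemLp X 2 μ)
    (hXm : AEStronglyMeasurable[m] X μ) (h0 : μ[h|m] =ᵐ[μ] 0) :
    ∫ ω, ⟪h ω, X ω⟫ ∂μ = 0 := by
  set f : Lp H 2 μ := hh.toLp h with hf
  set Y : Lp H 2 μ := hX.toLp X with hY
  have hcl2 : (condExpL2 H ℝ hm f : Lp H 2 μ) =ᵐ[μ] μ[h|m] := by
    refine ae_eq_condExp_of_forall_setIntegral_eq hm (hh.integrable one_le_two)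
      (fun s _ hμs => integrableOn_condExpL2_of_measure_ne_top hm hμs.ne f)
      (fun s hs hμs => ?_) (aestronglyMeasurable_condExpL2 hm f)
    rw [integral_condExpL2_eq hm f hs hμs.ne]
    exact setIntegral_congr_ae (hm s hs |> fun hs' => hs')
      (hh.coeFn_toLp.mono fun ω hω _ => hω)
  have hcl20 : (condExpL2 H ℝ hm f : Lp H 2 μ) =ᵐ[μ] 0 := hcl2.trans h0
  have hYm : AEStronglyMeasurable[m] (Y : Ω → H) μ := hXm.congr hX.coeFn_toLp.symm
  calc ∫ ω, ⟪h ω, X ω⟫ ∂μ = ∫ ω, ⟪f ω, Y ω⟫ ∂μ := by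
        refine integral_congr_ae ?_
        filter_upwards [hh.coeFn_toLp, hX.coeFn_toLp] with ω h1 h2
        rw [h1, h2]
    _ = (inner ℝ f Y) := (L2.inner_def f Y).symm
    _ = (inner ℝ ((condExpL2 H ℝ hm f : Lp H 2 μ)) Y) :=
        (inner_condExpL2_eq_inner_fun hm f Y hYm).symm
    _ = ∫ ω, ⟪(condExpL2 H ℝ hm f : Lp H 2 μ) ω, Y ω⟫ ∂μ := L2.inner_def _ Y
    _ = 0 := by
        rw [← integral_zero Ω ℝ (μ := μ)]
        refine integral_congr_ae ?_
        filter_upwards [hcl20] with ω hω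
        simp [hω]

set_option maxHeartbeats 1000000 in
-- arithmetic core of the contraction induction step
lemma sgd_arith (lam θ V D B ε n : ℝ) (hn : 1 ≤ n) (hlam : 0 < lam) (hθ : 0 < θ)
    (hlamθ : 2 ≤ lam*θ) (hDV : θ^2*V ≤ D) (hBW : 2/lam + 2*θ ≤ lam*B)
    (hD0 : 0 ≤ D) (hB0 : 0 ≤ B) (hV : 0 ≤ V) :
    (1 - lam*(θ/n))*(D/n + B*ε^2) + (θ/n)*(2*ε^2/lam) + (θ/n)^2*V + 2*(θ/n)^2*ε^2
      ≤ D/(n+1) + B*ε^2 := by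
  have hn0 : (0:ℝ) < n := lt_of_lt_of_le one_pos hn
  have hn1 : (0:ℝ) < n + 1 := by linarith
  rw [← sub_nonneg]
  have expand : D/(n+1) + B*ε^2 -
      ((1 - lam*(θ/n))*(D/n + B*ε^2) + (θ/n)*(2*ε^2/lam) + (θ/n)^2*V + 2*(θ/n)^2*ε^2)
      = ((D*(lam*θ - 1)*n - θ^2*V*n + D*lam*θ - θ^2*V)*lam
          + (B*lam^2*θ*n - 2*θ*n - 2*θ^2*lam)*(n+1)*ε^2) / (lam*n^2*(n+1)) := by
    field_simp
    ring
  rw [expand]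
  apply div_nonneg _ (by positivity)
  have hDn : 0 ≤ D*n*(lam*θ - 2) :=
    mul_nonneg (mul_nonneg hD0 hn0.le) (by linarith)
  have hVn : θ^2*V*n ≤ D*n := mul_le_mul_of_nonneg_right hDV hn0.le
  have h1 : 0 ≤ D*(lam*θ - 1)*n - θ^2*V*n := by nlinarith
  have h2 : 0 ≤ D*lam*θ - θ^2*V := by
    have : 0 ≤ D*(lam*θ - 2) := mul_nonneg hD0 (by linarith)
    nlinarith
  have h3 : 0 ≤ B*lam^2*θ*n - 2*θ*n - 2*θ^2*lam := by
    have hb : 2 + 2*θ*lam ≤ lam^2*B := by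
      have h := mul_le_mul_of_nonneg_left hBW hlam.le
      have hc : lam*(2/lam) = 2 := by field_simp
      nlinarith
    have key : (2 + 2*θ*lam)*(θ*n) ≤ lam^2*B*(θ*n) :=
      mul_le_mul_of_nonneg_right hb (by positivity)
    have h2' : 2*θ^2*lam ≤ 2*θ^2*lam*n := by
      nlinarith [mul_nonneg (mul_nonneg (sq_nonneg θ) hlam.le) (by linarith : (0:ℝ) ≤ n - 1)]
    ring_nf at key h2' ⊢
    linarith
  have h4 : 0 ≤ ε^2 := sq_nonneg ε
  have t1 : 0 ≤ (D*(lam*θ - 1)*n - θ^2*V*n + D*lam*θ - θ^2*V)*lam :=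
    mul_nonneg (by linarith) hlam.le
  have t2 : 0 ≤ (B*lam^2*θ*n - 2*θ*n - 2*θ^2*lam)*(n+1)*ε^2 :=
    mul_nonneg (mul_nonneg h3 hn1.le) h4
  linarith

end Aux

set_option maxHeartbeats 6000000 in
/-- Abstract convergence of batch stochastic gradient descent with a biased gradient oracle:
under strong monotonicity and Lipschitz continuity of the gradient, a uniformly `ε`-biased
oracle `G`, conditionally unbiased noisy gradient samples with conditional variance at most `V`,
and step sizes `η_k = θ/(k+M)` with `λθ - 4C_Lθ²/(1+M) > 2` and `θλ/M ≤ 1`, the iterates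
satisfy `E[‖u^K - u*‖²] ≤ C (1/K + ε²)` for all `K ≥ 1`. -/
theorem batch_sgd_convergence
    {H : Type} [NormedAddCommGroup H] [InnerProductSpace ℝ H] [CompleteSpace H]
    (J : H → ℝ) (gradJ : H → H) (hgrad : ∀ w, HasGradientAt J (gradJ w) w)
    (lam CL : ℝ) (hlam : 0 < lam) (hCL : 0 < CL)
    (hmono : ∀ v w : H, lam * ‖v - w‖ ^ 2 ≤ ⟪gradJ v - gradJ w, v - w⟫)
    (hlip : ∀ v w : H, ‖gradJ v - gradJ w‖ ≤ CL * ‖v - w‖)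
    (ustar : H) (hcrit : gradJ ustar = 0)
    (θ M : ℝ) (hθ : 0 < θ) (hM : 1 ≤ M)
    (hstep : 2 < lam * θ - 4 * CL * θ ^ 2 / (1 + M))
    (hstep' : θ * lam / M ≤ 1)
    (V : ℝ) (hV : 0 ≤ V) (u0 : H) :
    ∃ C > 0, ∀ ε : ℝ, 0 ≤ ε →
      ∀ G : H → H, (∀ u : H, ‖G u - gradJ u‖ ≤ ε) →
      ∀ (Ω : Type) (mΩ : MeasurableSpace Ω) (μ : Measure Ω),
        IsProbabilityMeasure μ →
      ∀ 𝒢 : Filtration ℕ mΩ, 𝒢 0 = ⊥ →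
      ∀ g : ℕ → Ω → H,
        (∀ k, MemLp (g k) 2 μ) →
        (∀ k, StronglyMeasurable[𝒢 (k + 1)] (g k)) →
      ∀ U : ℕ → Ω → H,
        (U 0 = fun _ => u0) →
        (∀ k, U (k + 1) = fun ω => U k ω - (θ / ((k : ℝ) + M)) • g k ω) →
        (∀ k, μ[g k | 𝒢 k] =ᵐ[μ] fun ω => G (U k ω)) →
        (∀ k, ∀ᵐ ω ∂μ, (μ[fun ω' => ‖g k ω' - G (U k ω')‖ ^ 2 | 𝒢 k]) ω ≤ V) →
      ∀ K : ℕ, 1 ≤ K →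
        ∫ ω, ‖U K ω - ustar‖ ^ 2 ∂μ ≤ C * (1 / (K : ℝ) + ε ^ 2) := by
  classical
  have hM0 : (0:ℝ) < M := lt_of_lt_of_le one_pos hM
  have hlamθ : 2 < lam * θ := by
    have hpos : 0 < 4 * CL * θ ^ 2 / (1 + M) := by positivity
    linarith
  have hlamθM : lam * θ ≤ M := by
    have := (div_le_one hM0).mp hstep'
    linarith
  set a0 : ℝ := ‖u0 - ustar‖ ^ 2 with ha0_def
  have ha0 : 0 ≤ a0 := by positivity
  set k₀ : ℕ := ⌈4 * CL ^ 2 * θ / lam⌉₊ + 1 with hk0_def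
  have hk₀1 : 1 ≤ k₀ := Nat.le_add_left 1 _
  have hk₀R : 4 * CL ^ 2 * θ / lam ≤ (k₀ : ℝ) := by
    have h := Nat.le_ceil (4 * CL ^ 2 * θ / lam)
    have : ((⌈4 * CL ^ 2 * θ / lam⌉₊ : ℝ)) ≤ (k₀ : ℝ) := by
      rw [hk0_def]; push_cast; linarith
    linarith
  set Q : ℝ := 2 + 4 * θ ^ 2 * CL ^ 2 with hQ_def
  have hQ1 : 1 ≤ Q := by
    have : (0:ℝ) ≤ 4 * θ ^ 2 * CL ^ 2 := by positivity
    rw [hQ_def]; linarith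
  have hQp : (0:ℝ) < Q := by linarith
  set R : ℝ := 2 * θ ^ 2 * V + 4 * θ ^ 2 with hR_def
  have hR0 : 0 ≤ R := by rw [hR_def]; positivity
  set W : ℝ := Q ^ k₀ * (a0 + R * (k₀ : ℝ)) with hW_def
  have hW0 : 0 ≤ W := by
    rw [hW_def]
    exact mul_nonneg (pow_nonneg hQp.le _)
      (add_nonneg ha0 (mul_nonneg hR0 (Nat.cast_nonneg _)))
  set D : ℝ := ((k₀ : ℝ) + M) * W + θ ^ 2 * V with hD_def
  have hD0 : 0 ≤ D := by
    rw [hD_def]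
    exact add_nonneg (mul_nonneg (by positivity) hW0) (by positivity)
  set B : ℝ := W + 2 / lam ^ 2 + 2 * θ / lam with hB_def
  have hB0 : 0 ≤ B := by
    rw [hB_def]
    have h1 : (0:ℝ) ≤ 2 / lam ^ 2 := by positivity
    have h2 : (0:ℝ) ≤ 2 * θ / lam := by positivity
    linarith
  have hDV' : θ ^ 2 * V ≤ D := by
    rw [hD_def]
    have : 0 ≤ ((k₀ : ℝ) + M) * W := mul_nonneg (by positivity) hW0
    linarith
  have hBW2 : 2 / lam + 2 * θ ≤ lam * B := by
    have hln : lam ≠ 0 := ne_of_gt hlam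
    have e : lam * B = lam*W + 2/lam + 2*θ := by
      rw [hB_def]; field_simp
    rw [e]
    have : 0 ≤ lam * W := mul_nonneg hlam.le hW0
    linarith
  refine ⟨((k₀ : ℝ) + 1) * W + D + B + 1, ?_, ?_⟩
  · have : 0 ≤ ((k₀ : ℝ) + 1) * W := mul_nonneg (by positivity) hW0
    linarith
  intro ε hε G hG Ω mΩ μ hprob 𝒢 h𝒢0 g hg2 hgm U hU0 hUrec hunb hvar
  haveI := hprob
  -- step size facts
  have hden : ∀ k : ℕ, (0:ℝ) < (k : ℝ) + M := fun k => by
    have := Nat.cast_nonneg (α := ℝ) k; linarith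
  have hden1 : ∀ k : ℕ, (1:ℝ) ≤ (k : ℝ) + M := fun k => by
    have := Nat.cast_nonneg (α := ℝ) k; linarith
  have hηpos : ∀ k : ℕ, 0 < θ / ((k:ℝ) + M) := fun k => div_pos hθ (hden k)
  have hηθ : ∀ k : ℕ, θ / ((k:ℝ) + M) ≤ θ := fun k => by
    rw [div_le_iff₀ (hden k)]
    nlinarith [hden1 k, hθ.le]
  have hlamEta : ∀ k : ℕ, lam * (θ / ((k:ℝ) + M)) ≤ 1 := fun k => by
    rw [mul_div_assoc']
    rw [div_le_one (hden k)]
    have := Nat.cast_nonneg (α := ℝ) k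
    linarith
  -- measurability and integrability of the iterates
  have hUmeas : ∀ k, StronglyMeasurable[𝒢 k] (U k) := by
    intro k; induction k with
    | zero =>
      have h0 : StronglyMeasurable[𝒢 0] (fun _ : Ω => u0) := stronglyMeasurable_const
      rwa [← hU0] at h0
    | succ k ih =>
      rw [hUrec k]
      exact (ih.mono (𝒢.mono (Nat.le_succ k))).sub ((hgm k).const_smul _)
  have hU2 : ∀ k, MemLp (U k) 2 μ := by
    intro k; induction k with
    | zero =>
      have h0 : MemLp (fun _ : Ω => u0) 2 μ := memLp_const _
      rwa [← hU0] at h0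
    | succ k ih =>
      rw [hUrec k]
      exact ih.sub ((hg2 k).const_smul _)
  have hd2 : ∀ k, MemLp (fun ω => U k ω - ustar) 2 μ := fun k =>
    (hU2 k).sub (memLp_const _)
  have hdmeas : ∀ k, AEStronglyMeasurable[𝒢 k] (fun ω => U k ω - ustar) μ := fun k =>
    ((hUmeas k).sub stronglyMeasurable_const).aestronglyMeasurable
  -- the oracle evaluated along the iterates
  have hGbd : ∀ u : H, ‖G u‖ ≤ CL * ‖u - ustar‖ + ε := by
    intro u
    have h1 : ‖gradJ u‖ ≤ CL * ‖u - ustar‖ := by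
      have := hlip u ustar; rwa [hcrit, sub_zero] at this
    calc ‖G u‖ = ‖(G u - gradJ u) + gradJ u‖ := by rw [sub_add_cancel]
      _ ≤ ‖G u - gradJ u‖ + ‖gradJ u‖ := norm_add_le _ _
      _ ≤ ε + CL * ‖u - ustar‖ := add_le_add (hG u) h1
      _ = CL * ‖u - ustar‖ + ε := add_comm _ _
  have hGaesm : ∀ k, AEStronglyMeasurable (fun ω => G (U k ω)) μ := fun k =>
    AEStronglyMeasurable.congr
      (stronglyMeasurable_condExp.mono (𝒢.le k)).aestronglyMeasurable (hunb k)
  have hG2 : ∀ k, MemLp (fun ω => G (U k ω)) 2 μ := by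
    intro k
    refine MemLp.of_le ((((hd2 k).norm.const_mul CL).add (memLp_const ε))) (hGaesm k) ?_
    filter_upwards with ω
    simp only [Pi.add_apply]
    have h1 := hGbd (U k ω)
    have h2 : CL * ‖U k ω - ustar‖ + ε ≤ ‖CL * ‖U k ω - ustar‖ + ε‖ := le_abs_self _
    calc ‖G (U k ω)‖ ≤ CL * ‖U k ω - ustar‖ + ε := h1
      _ ≤ ‖CL * ‖U k ω - ustar‖ + ε‖ := h2
  have hGmeas' : ∀ k, AEStronglyMeasurable[𝒢 k] (fun ω => G (U k ω)) μ := fun k =>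
    AEStronglyMeasurable.congr stronglyMeasurable_condExp.aestronglyMeasurable (hunb k)
  -- the noise term
  have hh2 : ∀ k, MemLp (fun ω => g k ω - G (U k ω)) 2 μ := fun k =>
    (hg2 k).sub (hG2 k)
  have hcond0 : ∀ k, μ[(fun ω => g k ω - G (U k ω)) | 𝒢 k] =ᵐ[μ] 0 := by
    intro k
    have hgint : Integrable (g k) μ := (hg2 k).integrable one_le_two
    have hGint : Integrable (fun ω => G (U k ω)) μ := (hG2 k).integrable one_le_two
    have hsub := condExp_sub (μ := μ) (m := 𝒢 k) hgint hGint
    have hid : μ[(fun ω => G (U k ω)) | 𝒢 k] =ᵐ[μ] (fun ω => G (U k ω)) :=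
      condExp_of_aestronglyMeasurable' (𝒢.le k) (hGmeas' k) hGint
    have heq : (fun ω => g k ω - G (U k ω)) = g k - (fun ω => G (U k ω)) := rfl
    rw [heq]
    filter_upwards [hsub, hid, hunb k] with ω h1 h2 h3
    simp only [Pi.sub_apply, Pi.zero_apply] at *
    rw [h1, h2, h3, sub_self]
  -- orthogonality relations
  have horth1 : ∀ k, ∫ ω, ⟪g k ω - G (U k ω), U k ω - ustar⟫ ∂μ = 0 := fun k =>
    integral_inner_eq_zero_of_condexp_eq_zero (𝒢.le k) (hh2 k) (hd2 k) (hdmeas k) (hcond0 k)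
  have horth2 : ∀ k, ∫ ω, ⟪g k ω - G (U k ω), G (U k ω)⟫ ∂μ = 0 := fun k =>
    integral_inner_eq_zero_of_condexp_eq_zero (𝒢.le k) (hh2 k) (hG2 k) (hGmeas' k) (hcond0 k)
  -- integrability facts
  have hdsq_int : ∀ k, Integrable (fun ω => ‖U k ω - ustar‖ ^ 2) μ := fun k =>
    (memLp2_integrable_inner (hd2 k) (hd2 k)).congr
      (Filter.Eventually.of_forall fun ω => real_inner_self_eq_norm_sq _)
  have hgsq_int : ∀ k, Integrable (fun ω => ‖g k ω‖ ^ 2) μ := fun k =>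
    (memLp2_integrable_inner (hg2 k) (hg2 k)).congr
      (Filter.Eventually.of_forall fun ω => real_inner_self_eq_norm_sq _)
  have hhsq_int : ∀ k, Integrable (fun ω => ‖g k ω - G (U k ω)‖ ^ 2) μ := fun k =>
    (memLp2_integrable_inner (hh2 k) (hh2 k)).congr
      (Filter.Eventually.of_forall fun ω => real_inner_self_eq_norm_sq _)
  have hGsq_int : ∀ k, Integrable (fun ω => ‖G (U k ω)‖ ^ 2) μ := fun k =>
    (memLp2_integrable_inner (hG2 k) (hG2 k)).congr
      (Filter.Eventually.of_forall fun ω => real_inner_self_eq_norm_sq _)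
  have hgd_int : ∀ k, Integrable (fun ω => ⟪g k ω, U k ω - ustar⟫) μ := fun k =>
    memLp2_integrable_inner (hg2 k) (hd2 k)
  have hGd_int : ∀ k, Integrable (fun ω => ⟪G (U k ω), U k ω - ustar⟫) μ := fun k =>
    memLp2_integrable_inner (hG2 k) (hd2 k)
  have hhG_int : ∀ k, Integrable (fun ω => ⟪g k ω - G (U k ω), G (U k ω)⟫) μ := fun k =>
    memLp2_integrable_inner (hh2 k) (hG2 k)
  -- variance bound
  have hVar : ∀ k, ∫ ω, ‖g k ω - G (U k ω)‖ ^ 2 ∂μ ≤ V := by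
    intro k
    have h1 : ∫ ω, ‖g k ω - G (U k ω)‖ ^ 2 ∂μ
        = ∫ ω, (μ[fun ω' => ‖g k ω' - G (U k ω')‖ ^ 2 | 𝒢 k]) ω ∂μ :=
      (integral_condExp (𝒢.le k)).symm
    rw [h1]
    calc ∫ ω, (μ[fun ω' => ‖g k ω' - G (U k ω')‖ ^ 2 | 𝒢 k]) ω ∂μ
        ≤ ∫ _ω, V ∂μ := integral_mono_ae integrable_condExp (integrable_const V) (hvar k)
      _ = V := by simp [measure_univ]
  -- the quantity we track
  have ha_nonneg : ∀ k, 0 ≤ ∫ ω, ‖U k ω - ustar‖ ^ 2 ∂μ := fun k =>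
    integral_nonneg fun ω => by positivity
  have ha0eq : ∫ ω, ‖U 0 ω - ustar‖ ^ 2 ∂μ = a0 := by
    simp only [hU0]
    rw [ha0_def]
    simp [measure_univ]
  -- one-step identity
  have hstep_id : ∀ k, (∫ ω, ‖U (k+1) ω - ustar‖ ^ 2 ∂μ) = (∫ ω, ‖U k ω - ustar‖ ^ 2 ∂μ)
      - (2 * (θ/((k:ℝ)+M))) * (∫ ω, ⟪g k ω, U k ω - ustar⟫ ∂μ)
      + (θ/((k:ℝ)+M))^2 * (∫ ω, ‖g k ω‖ ^ 2 ∂μ) := by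
    intro k
    have hpt : (fun ω => ‖U (k+1) ω - ustar‖ ^ 2)
        = fun ω => (‖U k ω - ustar‖ ^ 2
            - 2 * (θ/((k:ℝ)+M)) * ⟪g k ω, U k ω - ustar⟫)
            + (θ/((k:ℝ)+M))^2 * ‖g k ω‖ ^ 2 := by
      funext ω
      rw [hUrec k]
      simp only
      have hrw : U k ω - (θ/((k:ℝ)+M)) • g k ω - ustar
          = (U k ω - ustar) - (θ/((k:ℝ)+M)) • g k ω := by abel
      rw [hrw, norm_sub_sq_real, real_inner_smul_right, real_inner_comm, norm_smul,
        Real.norm_eq_abs, mul_pow, sq_abs]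
      ring
    have i2 : Integrable (fun ω => 2 * (θ/((k:ℝ)+M)) * ⟪g k ω, U k ω - ustar⟫) μ :=
      (hgd_int k).const_mul _
    have i1 : Integrable (fun ω => ‖U k ω - ustar‖ ^ 2
        - 2 * (θ/((k:ℝ)+M)) * ⟪g k ω, U k ω - ustar⟫) μ := (hdsq_int k).sub i2
    have i3 : Integrable (fun ω => (θ/((k:ℝ)+M))^2 * ‖g k ω‖ ^ 2) μ :=
      (hgsq_int k).const_mul _
    rw [show (∫ ω, ‖U (k+1) ω - ustar‖ ^ 2 ∂μ)
        = ∫ ω, ((‖U k ω - ustar‖ ^ 2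
            - 2 * (θ/((k:ℝ)+M)) * ⟪g k ω, U k ω - ustar⟫)
            + (θ/((k:ℝ)+M))^2 * ‖g k ω‖ ^ 2) ∂μ from by rw [← hpt],
      integral_add i1 i3, integral_sub (hdsq_int k) i2,
      integral_const_mul, integral_const_mul]
  -- second moment bound
  have hI2 : ∀ k, ∫ ω, ‖g k ω‖ ^ 2 ∂μ ≤ V + 2*CL^2*(∫ ω, ‖U k ω - ustar‖ ^ 2 ∂μ) + 2*ε^2 := by
    intro k
    have hdecomp : (fun ω => ‖g k ω‖ ^ 2)
        = fun ω => ‖g k ω - G (U k ω)‖ ^ 2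
            + 2 * ⟪g k ω - G (U k ω), G (U k ω)⟫ + ‖G (U k ω)‖ ^ 2 := by
      funext ω
      have h := norm_add_sq_real (g k ω - G (U k ω)) (G (U k ω))
      rw [sub_add_cancel] at h
      linarith
    have h1 : ∫ ω, ‖g k ω‖ ^ 2 ∂μ
        = (∫ ω, ‖g k ω - G (U k ω)‖ ^ 2 ∂μ)
          + 2 * (∫ ω, ⟪g k ω - G (U k ω), G (U k ω)⟫ ∂μ)
          + ∫ ω, ‖G (U k ω)‖ ^ 2 ∂μ := by
      have i2 : Integrable (fun ω => 2 * ⟪g k ω - G (U k ω), G (U k ω)⟫) μ :=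
        (hhG_int k).const_mul _
      have i1 : Integrable (fun ω => ‖g k ω - G (U k ω)‖ ^ 2
          + 2 * ⟪g k ω - G (U k ω), G (U k ω)⟫) μ := (hhsq_int k).add i2
      rw [hdecomp, integral_add i1 (hGsq_int k), integral_add (hhsq_int k) i2,
        integral_const_mul]
    have hGsq : ∫ ω, ‖G (U k ω)‖ ^ 2 ∂μ ≤ 2*CL^2*(∫ ω, ‖U k ω - ustar‖ ^ 2 ∂μ) + 2*ε^2 := by
      have hpt : ∀ ω, ‖G (U k ω)‖ ^ 2 ≤ 2*CL^2*‖U k ω - ustar‖ ^ 2 + 2*ε^2 := by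
        intro ω
        have h := hGbd (U k ω)
        have h2 : ‖G (U k ω)‖ ^ 2 ≤ (CL * ‖U k ω - ustar‖ + ε) ^ 2 :=
          pow_le_pow_left₀ (norm_nonneg _) h 2
        nlinarith [sq_nonneg (CL * ‖U k ω - ustar‖ - ε)]
      calc ∫ ω, ‖G (U k ω)‖ ^ 2 ∂μ
          ≤ ∫ ω, (2*CL^2*‖U k ω - ustar‖ ^ 2 + 2*ε^2) ∂μ :=
            integral_mono (hGsq_int k)
              (((hdsq_int k).const_mul _).add (integrable_const _)) hpt
        _ = 2*CL^2*(∫ ω, ‖U k ω - ustar‖ ^ 2 ∂μ) + 2*ε^2 := by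
            have i1 : Integrable (fun ω => 2*CL^2*‖U k ω - ustar‖ ^ 2) μ :=
              (hdsq_int k).const_mul _
            rw [integral_add i1 (integrable_const _), integral_const_mul]
            simp [measure_univ]
    have hv := hVar k
    have ho := horth2 k
    rw [h1, ho]
    linarith
  have hI2nn : ∀ k, 0 ≤ ∫ ω, ‖g k ω‖ ^ 2 ∂μ := fun k =>
    integral_nonneg fun ω => by positivity
  -- inner product lower bound
  have hI1 : ∀ k, (3/4)*lam*(∫ ω, ‖U k ω - ustar‖ ^ 2 ∂μ) - ε^2/lam ≤ ∫ ω, ⟪g k ω, U k ω - ustar⟫ ∂μ := by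
    intro k
    have hsplit : ∫ ω, ⟪g k ω, U k ω - ustar⟫ ∂μ
        = (∫ ω, ⟪g k ω - G (U k ω), U k ω - ustar⟫ ∂μ)
          + ∫ ω, ⟪G (U k ω), U k ω - ustar⟫ ∂μ := by
      have hpt2 : (fun ω => ⟪g k ω, U k ω - ustar⟫)
          = fun ω => ⟪g k ω - G (U k ω), U k ω - ustar⟫
              + ⟪G (U k ω), U k ω - ustar⟫ := by
        funext ω
        rw [← inner_add_left, sub_add_cancel]
      rw [hpt2, integral_add (memLp2_integrable_inner (hh2 k) (hd2 k)) (hGd_int k)]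
    rw [hsplit, horth1 k, zero_add]
    have hpt : ∀ ω, (3/4)*lam*‖U k ω - ustar‖ ^ 2 - ε^2/lam
        ≤ ⟪G (U k ω), U k ω - ustar⟫ := by
      intro ω
      have hm : lam * ‖U k ω - ustar‖ ^ 2 ≤ ⟪gradJ (U k ω), U k ω - ustar⟫ := by
        have := hmono (U k ω) ustar; rwa [hcrit, sub_zero] at this
      have hbias : |⟪G (U k ω) - gradJ (U k ω), U k ω - ustar⟫|
          ≤ ε * ‖U k ω - ustar‖ := by
        calc |⟪G (U k ω) - gradJ (U k ω), U k ω - ustar⟫|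
            ≤ ‖G (U k ω) - gradJ (U k ω)‖ * ‖U k ω - ustar‖ := abs_real_inner_le_norm _ _
          _ ≤ ε * ‖U k ω - ustar‖ :=
            mul_le_mul_of_nonneg_right (hG _) (norm_nonneg _)
      have hsplit2 : ⟪G (U k ω), U k ω - ustar⟫
          = ⟪gradJ (U k ω), U k ω - ustar⟫
            + ⟪G (U k ω) - gradJ (U k ω), U k ω - ustar⟫ := by
        rw [← inner_add_left, add_sub_cancel]
      have hamgm : ε * ‖U k ω - ustar‖ ≤ (lam/4)*‖U k ω - ustar‖ ^ 2 + ε^2/lam := by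
        have hl : lam * (ε^2/lam) = ε^2 := by field_simp
        nlinarith [sq_nonneg (lam*‖U k ω - ustar‖ - 2*ε), hlam, norm_nonneg (U k ω - ustar)]
      have habs := neg_abs_le ⟪G (U k ω) - gradJ (U k ω), U k ω - ustar⟫
      rw [hsplit2]
      linarith
    calc (3/4)*lam*(∫ ω, ‖U k ω - ustar‖ ^ 2 ∂μ) - ε^2/lam
        = ∫ ω, ((3/4)*lam*‖U k ω - ustar‖ ^ 2 - ε^2/lam) ∂μ := by
          have i1 : Integrable (fun ω => (3/4)*lam*‖U k ω - ustar‖ ^ 2) μ :=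
            (hdsq_int k).const_mul _
          rw [integral_sub i1 (integrable_const _), integral_const_mul]
          simp [measure_univ]
      _ ≤ ∫ ω, ⟪G (U k ω), U k ω - ustar⟫ ∂μ :=
          integral_mono (((hdsq_int k).const_mul _).sub (integrable_const _))
            (hGd_int k) hpt
  -- crude one-step bound
  have hcrude : ∀ k, (∫ ω, ‖U (k+1) ω - ustar‖ ^ 2 ∂μ) ≤ Q*(∫ ω, ‖U k ω - ustar‖ ^ 2 ∂μ) + R*(1+ε^2) := by
    intro k
    have hid := hstep_id k
    have hη := hηpos k
    have hηθ' := hηθ k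
    have h1 : -(2*(θ/((k:ℝ)+M))) * (∫ ω, ⟪g k ω, U k ω - ustar⟫ ∂μ)
        ≤ (∫ ω, ‖U k ω - ustar‖ ^ 2 ∂μ) + (θ/((k:ℝ)+M))^2 * (∫ ω, ‖g k ω‖ ^ 2 ∂μ) := by
      have hpt : ∀ ω, -(2*(θ/((k:ℝ)+M))) * ⟪g k ω, U k ω - ustar⟫
          ≤ ‖U k ω - ustar‖ ^ 2 + (θ/((k:ℝ)+M))^2 * ‖g k ω‖ ^ 2 := by
        intro ω
        nlinarith [abs_real_inner_le_norm (g k ω) (U k ω - ustar),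
          sq_nonneg ((θ/((k:ℝ)+M))*‖g k ω‖ - ‖U k ω - ustar‖),
          neg_abs_le ⟪g k ω, U k ω - ustar⟫, hη.le,
          norm_nonneg (g k ω), norm_nonneg (U k ω - ustar)]
      calc -(2*(θ/((k:ℝ)+M))) * (∫ ω, ⟪g k ω, U k ω - ustar⟫ ∂μ)
          = ∫ ω, -(2*(θ/((k:ℝ)+M))) * ⟪g k ω, U k ω - ustar⟫ ∂μ :=
            (integral_const_mul _ _).symm
        _ ≤ ∫ ω, (‖U k ω - ustar‖ ^ 2 + (θ/((k:ℝ)+M))^2 * ‖g k ω‖ ^ 2) ∂μ :=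
            integral_mono ((hgd_int k).const_mul _)
              ((hdsq_int k).add ((hgsq_int k).const_mul _))
              hpt
        _ = (∫ ω, ‖U k ω - ustar‖ ^ 2 ∂μ) + (θ/((k:ℝ)+M))^2 * (∫ ω, ‖g k ω‖ ^ 2 ∂μ) := by
            have i1 : Integrable (fun ω => (θ/((k:ℝ)+M))^2 * ‖g k ω‖ ^ 2) μ :=
              (hgsq_int k).const_mul _
            rw [integral_add (hdsq_int k) i1, integral_const_mul]
    have hgb := hI2 k
    have hgnn := hI2nn k
    have hη2 : (θ/((k:ℝ)+M))^2 ≤ θ^2 := by nlinarith [hη.le]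
    have hterm : (θ/((k:ℝ)+M))^2 * (∫ ω, ‖g k ω‖ ^ 2 ∂μ)
        ≤ θ^2 * (V + 2*CL^2*(∫ ω, ‖U k ω - ustar‖ ^ 2 ∂μ) + 2*ε^2) := by
      calc (θ/((k:ℝ)+M))^2 * (∫ ω, ‖g k ω‖ ^ 2 ∂μ)
          ≤ θ^2 * (∫ ω, ‖g k ω‖ ^ 2 ∂μ) := mul_le_mul_of_nonneg_right hη2 hgnn
        _ ≤ θ^2 * (V + 2*CL^2*(∫ ω, ‖U k ω - ustar‖ ^ 2 ∂μ) + 2*ε^2) :=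
            mul_le_mul_of_nonneg_left hgb (by positivity)
    rw [hQ_def, hR_def]
    nlinarith [hid, h1, hterm, ha_nonneg k,
      mul_nonneg (mul_nonneg (sq_nonneg θ) hV) (sq_nonneg ε),
      sq_nonneg θ, sq_nonneg ε]
  -- crude cumulative bound
  have hcum : ∀ k, (∫ ω, ‖U k ω - ustar‖ ^ 2 ∂μ) ≤ Q ^ k * (a0 + R*(k:ℝ)) * (1+ε^2) := by
    intro k
    induction k with
    | zero =>
      rw [ha0eq]
      simp only [pow_zero, Nat.cast_zero, mul_zero, add_zero, one_mul]
      nlinarith [ha0, sq_nonneg ε]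
    | succ k ih =>
      have h1 := hcrude k
      have hQk : (1:ℝ) ≤ Q^(k+1) := one_le_pow₀ hQ1
      have hXnn : (0:ℝ) ≤ a0 + R*(k:ℝ) :=
        add_nonneg ha0 (mul_nonneg hR0 (Nat.cast_nonneg _))
      have hterm : Q*(∫ ω, ‖U k ω - ustar‖ ^ 2 ∂μ) ≤ Q*(Q^k*(a0 + R*(k:ℝ))*(1+ε^2)) :=
        mul_le_mul_of_nonneg_left ih hQp.le
      have h2 : R*(1+ε^2) ≤ Q^(k+1)*(R*(1+ε^2)) :=
        le_mul_of_one_le_left (mul_nonneg hR0 (by positivity)) hQk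
      calc (∫ ω, ‖U (k+1) ω - ustar‖ ^ 2 ∂μ) ≤ Q*(∫ ω, ‖U k ω - ustar‖ ^ 2 ∂μ) + R*(1+ε^2) := h1
        _ ≤ Q*(Q^k*(a0 + R*(k:ℝ))*(1+ε^2)) + Q^(k+1)*(R*(1+ε^2)) := add_le_add hterm h2
        _ = Q^(k+1)*(a0 + R*((k:ℝ)+1))*(1+ε^2) := by rw [pow_succ]; ring
        _ = Q^(k+1)*(a0 + R*((k+1:ℕ):ℝ))*(1+ε^2) := by push_cast; ring
  -- contraction step
  have hcontract : ∀ k, k₀ ≤ k → (∫ ω, ‖U (k+1) ω - ustar‖ ^ 2 ∂μ)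
      ≤ (1 - lam*(θ/((k:ℝ)+M)))*(∫ ω, ‖U k ω - ustar‖ ^ 2 ∂μ)
        + (θ/((k:ℝ)+M))*(2*ε^2/lam) + (θ/((k:ℝ)+M))^2*V + 2*(θ/((k:ℝ)+M))^2*ε^2 := by
    intro k hk
    set η : ℝ := θ/((k:ℝ)+M) with hη_def
    have hkcast : (k₀:ℝ) ≤ (k:ℝ) := by exact_mod_cast hk
    have hkk : 4*CL^2*θ ≤ lam*(k:ℝ) := by
      have h := le_trans hk₀R hkcast
      rw [div_le_iff₀ hlam] at h
      linarith
    have hηCL : η*CL^2 ≤ lam/4 := by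
      rw [hη_def, div_mul_eq_mul_div, div_le_div_iff₀ (hden k) (by norm_num : (0:ℝ) < 4)]
      nlinarith [mul_nonneg hlam.le hM0.le]
    have hid := hstep_id k
    have h1 := hI1 k
    have h2 := hI2 k
    have hη : 0 < η := hηpos k
    have hstep1 : (∫ ω, ‖U (k+1) ω - ustar‖ ^ 2 ∂μ) ≤ (∫ ω, ‖U k ω - ustar‖ ^ 2 ∂μ)
        - 2*η*((3/4)*lam*(∫ ω, ‖U k ω - ustar‖ ^ 2 ∂μ) - ε^2/lam)
        + η^2*(V + 2*CL^2*(∫ ω, ‖U k ω - ustar‖ ^ 2 ∂μ) + 2*ε^2) := by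
      have hb1 := mul_le_mul_of_nonneg_left h1 (by positivity : (0:ℝ) ≤ 2*η)
      have hb2 := mul_le_mul_of_nonneg_left h2 (sq_nonneg η)
      rw [hid, ← hη_def]
      ring_nf
      ring_nf at hb1 hb2
      linarith
    have habs : η^2*(2*CL^2*(∫ ω, ‖U k ω - ustar‖ ^ 2 ∂μ)) ≤ η*(lam/2)*(∫ ω, ‖U k ω - ustar‖ ^ 2 ∂μ) := by
      have hc : η*(2*CL^2) ≤ lam/2 := by linarith [hηCL]
      nlinarith [mul_nonneg hη.le (ha_nonneg k)]
    ring_nf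
    ring_nf at hstep1 habs
    linarith
  -- contraction induction
  have hP : ∀ k, k₀ ≤ k → (∫ ω, ‖U k ω - ustar‖ ^ 2 ∂μ) ≤ D/((k:ℝ)+M) + B*ε^2 := by
    intro k hk
    induction k, hk using Nat.le_induction with
    | base =>
      have hb := hcum k₀
      have hDW : W ≤ D/((k₀:ℝ)+M) := by
        rw [le_div_iff₀ (by positivity)]
        rw [hD_def]
        nlinarith [sq_nonneg θ, hV]
      have hBW' : W ≤ B := by
        rw [hB_def]
        have h1 : (0:ℝ) ≤ 2/lam^2 := by positivity
        have h2 : (0:ℝ) ≤ 2*θ/lam := by positivity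
        linarith
      have hWε : W*ε^2 ≤ B*ε^2 := mul_le_mul_of_nonneg_right hBW' (sq_nonneg ε)
      have hbw : (∫ ω, ‖U k₀ ω - ustar‖ ^ 2 ∂μ) ≤ W*(1+ε^2) := by rw [hW_def]; exact hb
      calc (∫ ω, ‖U k₀ ω - ustar‖ ^ 2 ∂μ) ≤ W*(1+ε^2) := hbw
        _ = W + W*ε^2 := by ring
        _ ≤ D/((k₀:ℝ)+M) + B*ε^2 := add_le_add hDW hWε
    | succ n hn ih =>
      have hc := hcontract n hn
      have hnM : (1:ℝ) ≤ (n:ℝ)+M := hden1 n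
      have harith := sgd_arith lam θ V D B ε ((n:ℝ)+M) hnM hlam hθ hlamθ.le
        hDV' hBW2 hD0 hB0 hV
      have hcoef : (0:ℝ) ≤ 1 - lam*(θ/((n:ℝ)+M)) := by linarith [hlamEta n]
      have hIH' : (1 - lam*(θ/((n:ℝ)+M)))*((∫ ω, ‖U n ω - ustar‖ ^ 2 ∂μ))
          ≤ (1 - lam*(θ/((n:ℝ)+M)))*(D/((n:ℝ)+M) + B*ε^2) :=
        mul_le_mul_of_nonneg_left ih hcoef
      have hcast : ((n+1:ℕ):ℝ) + M = ((n:ℝ)+M) + 1 := by push_cast; ring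
      rw [hcast]
      linarith [hc, hIH', harith]
  -- conclusion
  intro K hK
  have hK1 : (1:ℝ) ≤ (K:ℝ) := by exact_mod_cast hK
  have hKpos : (0:ℝ) < (K:ℝ) := by linarith
  have hCD : D ≤ ((k₀ : ℝ) + 1) * W + D + B + 1 := by
    have : 0 ≤ ((k₀:ℝ)+1)*W := mul_nonneg (by positivity) hW0
    linarith
  have hCB : B ≤ ((k₀ : ℝ) + 1) * W + D + B + 1 := by
    have : 0 ≤ ((k₀:ℝ)+1)*W := mul_nonneg (by positivity) hW0
    linarith
  rcases le_or_gt k₀ K with hcase | hcase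
  · have h := hP K hcase
    have hdiv : D/((K:ℝ)+M) ≤ D/(K:ℝ) := by
      apply div_le_div_of_nonneg_left hD0 hKpos
      linarith
    calc (∫ ω, ‖U K ω - ustar‖ ^ 2 ∂μ) ≤ D/((K:ℝ)+M) + B*ε^2 := h
      _ ≤ D/(K:ℝ) + B*ε^2 := by linarith
      _ ≤ (((k₀:ℝ)+1)*W + D + B + 1)*(1/(K:ℝ))
            + (((k₀:ℝ)+1)*W + D + B + 1)*ε^2 := by
          refine add_le_add ?_ (mul_le_mul_of_nonneg_right hCB (sq_nonneg ε))
          rw [div_eq_mul_one_div]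
          exact mul_le_mul_of_nonneg_right hCD (by positivity)
      _ = (((k₀:ℝ)+1)*W + D + B + 1)*(1/(K:ℝ) + ε^2) := by ring
  · have h := hcum K
    have hKk : (K:ℝ) ≤ (k₀:ℝ) := by exact_mod_cast hcase.le
    have hmon : Q^K*(a0 + R*(K:ℝ)) ≤ W := by
      rw [hW_def]
      have h1 : Q^K ≤ Q^k₀ := pow_le_pow_right₀ hQ1 hcase.le
      have h2 : a0 + R*(K:ℝ) ≤ a0 + R*(k₀:ℝ) := by nlinarith [hR0]
      have h3 : (0:ℝ) ≤ a0 + R*(K:ℝ) :=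
        add_nonneg ha0 (mul_nonneg hR0 (Nat.cast_nonneg _))
      exact mul_le_mul h1 h2 h3 (pow_nonneg hQp.le _)
    have hWC : W*(K:ℝ) ≤ ((k₀:ℝ)+1)*W + D + B + 1 := by
      have h1 : W*(K:ℝ) ≤ W*(k₀:ℝ) := mul_le_mul_of_nonneg_left hKk hW0
      have h2 : W*(k₀:ℝ) ≤ ((k₀:ℝ)+1)*W := by nlinarith [hW0]
      linarith
    have hW1 : W ≤ (((k₀:ℝ)+1)*W + D + B + 1)*(1/(K:ℝ)) := by
      rw [mul_one_div, le_div_iff₀ hKpos]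
      linarith
    have hW2 : W ≤ ((k₀:ℝ)+1)*W + D + B + 1 := by
      have h1 : W ≤ W*(K:ℝ) := le_mul_of_one_le_right hW0 hK1
      linarith
    calc (∫ ω, ‖U K ω - ustar‖ ^ 2 ∂μ) ≤ Q^K*(a0 + R*(K:ℝ))*(1+ε^2) := h
      _ ≤ W*(1+ε^2) := mul_le_mul_of_nonneg_right hmon (by positivity)
      _ = W + W*ε^2 := by ring
      _ ≤ (((k₀:ℝ)+1)*W + D + B + 1)*(1/(K:ℝ))
            + (((k₀:ℝ)+1)*W + D + B + 1)*ε^2 :=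
          add_le_add hW1 (mul_le_mul_of_nonneg_right hW2 (sq_nonneg ε))
      _ = (((k₀:ℝ)+1)*W + D + B + 1)*(1/(K:ℝ) + ε^2) := by ring
end

section
/- Abstract convergence of the noisy damped fixed-point iteration (the convergence argument of Theorem thm_contract_discrete): Let H be a real Hilbert space, C > 0, μ < 0, and let Φ : H → H satisfy ‖Φ(u) − Φ(v)‖² ≤ C‖u − v‖² and ⟨Φ(u) − Φ(v), u − v⟩ ≤ μ‖u − v‖² for all u, v ∈ H, and let u* ∈ H satisfy Φ(u*) = u*. Let δ₁ ≥ 0, δ₂ ≥ 0, and let Φ_N : H → H satisfy ‖Φ_N(u) − Φ(u)‖ ≤ δ₁ for all u ∈ H. On a probability space (Ω, ℱ, ℙ) with a filtration (𝒢_k)_{k ≥ 0} such that 𝒢_0 is trivial, let (Φ̂_k)_{k ≥ 0} be H-valued square-integrable random variables with Φ̂_k measurable with respect to 𝒢_{k+1}, let ρ ∈ (0,1), and define u^0 ∈ H deterministic and u^{k+1} = (1 − ρ) Φ̂_k + ρ u^k. Assume that for every k, almost surely E[Φ̂_k | 𝒢_k] = Φ_N(u^k) and E[‖Φ̂_k −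 Φ_N(u^k)‖² | 𝒢_k] ≤ δ₂ (note u^k is 𝒢_k-measurable). Then there exist ρ ∈ (0,1), η ∈ (0,1) and a constant C′ > 0, all depending only on C and μ, such that for all k ≥ 0, E[‖u^k − u*‖²] ≤ η^k ‖u^0 − u*‖² + C′ (δ₁² + δ₂). -/
open MeasureTheory ProbabilityTheory RealInnerProductSpace

private lemma young_norm_sq {H : Type} [NormedAddCommGroup H] [InnerProductSpace ℝ H]
    {ε : ℝ} (hε : 0 < ε) (x y : H) :
    ‖x + y‖ ^ 2 ≤ (1 + ε) * ‖x‖ ^ 2 + (1 + ε⁻¹) * ‖y‖ ^ 2 := by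
  have h := real_inner_le_norm x y
  have key : 2 * (‖x‖ * ‖y‖) ≤ ε * ‖x‖ ^ 2 + ε⁻¹ * ‖y‖ ^ 2 := by
    rw [← sub_nonneg]
    have h2 : ε * ‖x‖ ^ 2 + ε⁻¹ * ‖y‖ ^ 2 - 2 * (‖x‖ * ‖y‖)
        = ε⁻¹ * (ε * ‖x‖ - ‖y‖) ^ 2 := by
      field_simp
      ring
    rw [h2]
    positivity
  rw [norm_add_sq_real]
  nlinarith

set_option maxHeartbeats 2000000 in
/-- Abstract convergence of the noisy damped fixed-point iteration: if `Φ` is Lipschitz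
(`‖Φ u - Φ v‖² ≤ C ‖u - v‖²`) and dissipative (`⟪Φ u - Φ v, u - v⟫ ≤ μ ‖u - v‖²` with `μ < 0`)
with fixed point `u*`, then there exist a damping `ρ ∈ (0,1)`, a rate `η ∈ (0,1)` and `C' > 0`,
depending only on `C` and `μ`, such that for every `δ₁`-accurate deterministic approximation
`Φ_N` of `Φ` and conditionally unbiased samples `Φ̂_k` of `Φ_N(u^k)` with conditional variance
at most `δ₂`, the damped iterates `u^{k+1} = (1-ρ) Φ̂_k + ρ u^k` satisfy
`E[‖u^k - u*‖²] ≤ η^k ‖u^0 - u*‖² + C' (δ₁² + δ₂)`. -/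
theorem noisy_damped_fixed_point_convergence
    {H : Type} [NormedAddCommGroup H] [InnerProductSpace ℝ H] [CompleteSpace H]
    (C μ₀ : ℝ) (hC : 0 < C) (hμ₀ : μ₀ < 0) (Φ : H → H)
    (hlip : ∀ u v : H, ‖Φ u - Φ v‖ ^ 2 ≤ C * ‖u - v‖ ^ 2)
    (hdiss : ∀ u v : H, ⟪Φ u - Φ v, u - v⟫ ≤ μ₀ * ‖u - v‖ ^ 2)
    (ustar : H) (hfix : Φ ustar = ustar) :
    ∃ ρ ∈ Set.Ioo (0 : ℝ) 1, ∃ η ∈ Set.Ioo (0 : ℝ) 1, ∃ C' > 0,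
      ∀ δ₁ δ₂ : ℝ, 0 ≤ δ₁ → 0 ≤ δ₂ →
      ∀ ΦN : H → H, (∀ u : H, ‖ΦN u - Φ u‖ ≤ δ₁) →
      ∀ (Ω : Type) (mΩ : MeasurableSpace Ω) (μ : Measure Ω),
        IsProbabilityMeasure μ →
      ∀ 𝒢 : Filtration ℕ mΩ, 𝒢 0 = ⊥ →
      ∀ Φhat : ℕ → Ω → H,
        (∀ k, MemLp (Φhat k) 2 μ) →
        (∀ k, StronglyMeasurable[𝒢 (k + 1)] (Φhat k)) →
      ∀ (u0 : H) (U : ℕ → Ω → H),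
        (U 0 = fun _ => u0) →
        (∀ k, U (k + 1) = fun ω => (1 - ρ) • Φhat k ω + ρ • U k ω) →
        (∀ k, μ[Φhat k | 𝒢 k] =ᵐ[μ] fun ω => ΦN (U k ω)) →
        (∀ k, ∀ᵐ ω ∂μ, (μ[fun ω' => ‖Φhat k ω' - ΦN (U k ω')‖ ^ 2 | 𝒢 k]) ω ≤ δ₂) →
      ∀ k : ℕ,
        ∫ ω, ‖U k ω - ustar‖ ^ 2 ∂μ
          ≤ η ^ k * ‖u0 - ustar‖ ^ 2 + C' * (δ₁ ^ 2 + δ₂) := by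
  have hC1 : (0:ℝ) < C + 1 := by linarith
  obtain ⟨t, ht_def⟩ : ∃ t : ℝ, t = 1 / (2 * (C + 1)) := ⟨_, rfl⟩
  have ht0 : 0 < t := by rw [ht_def]; positivity
  have htC : t * (C + 1) = 1 / 2 := by
    rw [ht_def]; field_simp
  have ht2 : t < 1/2 := by
    nlinarith
  obtain ⟨ρ, hρ_def⟩ : ∃ ρ : ℝ, ρ = 1 - t := ⟨_, rfl⟩
  have hρ0 : 0 < ρ := by rw [hρ_def]; linarith
  have hρ1 : ρ < 1 := by rw [hρ_def]; linarith
  have h1ρt : 1 - ρ = t := by rw [hρ_def]; ring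
  obtain ⟨ε, hε_def⟩ : ∃ ε : ℝ, ε = t / (2 * ρ) := ⟨_, rfl⟩
  have hε : 0 < ε := by rw [hε_def]; exact div_pos ht0 (by linarith)
  have hεinv : 0 < ε⁻¹ := inv_pos.2 hε
  obtain ⟨η, hη_def⟩ : ∃ η : ℝ, η = (1 + ρ) / 2 := ⟨_, rfl⟩
  have hη0 : 0 < η := by rw [hη_def]; linarith
  have hη1 : η < 1 := by rw [hη_def]; linarith
  have hερη : (1 + ε) * ρ = η := by
    rw [hε_def, hη_def, ← h1ρt]
    field_simp
    ring
  obtain ⟨K, hK_def⟩ : ∃ K : ℝ, K = 2 * (1 + ε⁻¹) * t ^ 2 := ⟨_, rfl⟩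
  have hK : 0 < K := by
    have h1 : (0:ℝ) < 1 + ε⁻¹ := by linarith
    rw [hK_def]
    exact mul_pos (mul_pos two_pos h1) (pow_pos ht0 2)
  have h1η : 0 < 1 - η := by linarith
  obtain ⟨C', hC'_def⟩ : ∃ C' : ℝ, C' = K / (1 - η) := ⟨_, rfl⟩
  have hC' : 0 < C' := by rw [hC'_def]; exact div_pos hK h1η
  have hC'K : η * C' + K = C' := by
    rw [hC'_def]
    field_simp
    ring
  -- the scalar contraction inequality
  have hpoly : (1 - ρ) ^ 2 * C + 2 * ((1 - ρ) * ρ) * μ₀ + ρ ^ 2 ≤ ρ := by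
    have h3 : 2 * (t * (1 - t)) * μ₀ ≤ 0 :=
      mul_nonpos_of_nonneg_of_nonpos (by nlinarith) hμ₀.le
    have h4 : t ^ 2 * C = t / 2 - t ^ 2 := by
      have h5 : t ^ 2 * C = t * (t * (C + 1)) - t ^ 2 := by ring
      rw [h5, htC]; ring
    rw [hρ_def]
    nlinarith
  refine ⟨ρ, ⟨hρ0, hρ1⟩, η, ⟨hη0, hη1⟩, C', hC', ?_⟩
  intro δ₁ δ₂ hδ₁ hδ₂ ΦN hΦN Ω mΩ μ hμprob 𝒢 h𝒢 Φhat hL2 hmeas u0 U hU0 hUsucc hub hvar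
  haveI := hμprob
  -- square integrability of the iterates
  have hUL2 : ∀ k, MemLp (U k) 2 μ := by
    intro k
    induction k with
    | zero => rw [hU0]; exact memLp_const u0
    | succ n ih =>
      rw [hUsucc]
      exact (((hL2 n).const_smul (1 - ρ)).add (ih.const_smul ρ))
  have hsqrtC : ∀ u : H, ‖Φ u - Φ ustar‖ ≤ Real.sqrt C * ‖u - ustar‖ := by
    intro u
    have h1 : ‖Φ u - Φ ustar‖ = Real.sqrt (‖Φ u - Φ ustar‖ ^ 2) :=
      (Real.sqrt_sq (norm_nonneg _)).symm
    rw [h1]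
    calc Real.sqrt (‖Φ u - Φ ustar‖ ^ 2) ≤ Real.sqrt (C * ‖u - ustar‖ ^ 2) :=
          Real.sqrt_le_sqrt (hlip u ustar)
      _ = Real.sqrt C * ‖u - ustar‖ := by
          rw [Real.sqrt_mul hC.le, Real.sqrt_sq (norm_nonneg _)]
  have hΦNmeas : ∀ k, AEStronglyMeasurable (fun ω => ΦN (U k ω)) μ := fun k =>
    ((stronglyMeasurable_condExp.mono (𝒢.le k)).aestronglyMeasurable).congr (hub k)
  have hΦNL2 : ∀ k, MemLp (fun ω => ΦN (U k ω)) 2 μ := by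
    intro k
    have hg : MemLp (fun ω => δ₁ + Real.sqrt C * ‖U k ω - ustar‖ + ‖ustar‖) 2 μ :=
      ((memLp_const δ₁).add
        ((((hUL2 k).sub (memLp_const ustar)).norm).const_mul (Real.sqrt C))).add
        (memLp_const ‖ustar‖)
    refine hg.of_le (hΦNmeas k) (Filter.Eventually.of_forall fun ω => ?_)
    have hb : ‖ΦN (U k ω)‖ ≤ δ₁ + Real.sqrt C * ‖U k ω - ustar‖ + ‖ustar‖ := by
      have heq : ‖ΦN (U k ω)‖
          = ‖(ΦN (U k ω) - Φ (U k ω)) + (Φ (U k ω) - Φ ustar) + Φ ustar‖ := by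
        congr 1; abel
      have h7 : ‖Φ ustar‖ = ‖ustar‖ := by rw [hfix]
      calc ‖ΦN (U k ω)‖
          ≤ ‖ΦN (U k ω) - Φ (U k ω)‖ + ‖Φ (U k ω) - Φ ustar‖ + ‖Φ ustar‖ := by
            rw [heq]
            exact (norm_add_le _ _).trans (add_le_add_left (norm_add_le _ _) _)
        _ ≤ δ₁ + Real.sqrt C * ‖U k ω - ustar‖ + ‖ustar‖ := by
            rw [h7]
            exact add_le_add_left (add_le_add (hΦN _) (hsqrtC _)) _
    exact hb.trans (le_abs_self _)
  have hξL2 : ∀ k, MemLp (fun ω => Φhat k ω - ΦN (U k ω)) 2 μ :=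
    fun k => (hL2 k).sub (hΦNL2 k)
  have hξint : ∀ k, Integrable (fun ω => ‖Φhat k ω - ΦN (U k ω)‖ ^ 2) μ :=
    fun k => ((hξL2 k).norm).integrable_sq
  have heint : ∀ k, Integrable (fun ω => ‖U k ω - ustar‖ ^ 2) μ :=
    fun k => (((hUL2 k).sub (memLp_const ustar)).norm).integrable_sq
  -- variance bound in expectation
  have hvar' : ∀ k, ∫ ω, ‖Φhat k ω - ΦN (U k ω)‖ ^ 2 ∂μ ≤ δ₂ := by
    intro k
    have h1 : ∫ ω, (μ[fun ω' => ‖Φhat k ω' - ΦN (U k ω')‖ ^ 2 | 𝒢 k]) ω ∂μ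
        = ∫ ω, ‖Φhat k ω - ΦN (U k ω)‖ ^ 2 ∂μ := integral_condExp (𝒢.le k)
    rw [← h1]
    calc ∫ ω, (μ[fun ω' => ‖Φhat k ω' - ΦN (U k ω')‖ ^ 2 | 𝒢 k]) ω ∂μ
        ≤ ∫ _ω, δ₂ ∂μ := integral_mono_ae integrable_condExp (integrable_const δ₂) (hvar k)
      _ = δ₂ := by simp [measure_univ]
  -- pointwise one-step contraction
  have hpt : ∀ k ω, ‖U (k+1) ω - ustar‖ ^ 2
      ≤ η * ‖U k ω - ustar‖ ^ 2 + K * (δ₁ ^ 2 + ‖Φhat k ω - ΦN (U k ω)‖ ^ 2) := by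
    intro k ω
    set u : H := U k ω with hu_def
    set ah : H := Φhat k ω with hah_def
    set X : H := (1 - ρ) • (Φ u - Φ ustar) + ρ • (u - ustar) with hX_def
    set W : H := (1 - ρ) • (ΦN u - Φ u) + (1 - ρ) • (ah - ΦN u) with hW_def
    have hdecomp : U (k+1) ω - ustar = X + W := by
      rw [hUsucc k]
      simp only [hX_def, hW_def, ← hu_def, ← hah_def]
      rw [hfix]
      module
    have hX2 : ‖X‖ ^ 2 ≤ ρ * ‖u - ustar‖ ^ 2 := by
      have hexp : ‖X‖ ^ 2
          = (1 - ρ) ^ 2 * ‖Φ u - Φ ustar‖ ^ 2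
            + 2 * ((1 - ρ) * ρ) * ⟪Φ u - Φ ustar, u - ustar⟫
            + ρ ^ 2 * ‖u - ustar‖ ^ 2 := by
        rw [hX_def, norm_add_sq_real, norm_smul, norm_smul, real_inner_smul_left,
          real_inner_smul_right, Real.norm_eq_abs, Real.norm_eq_abs,
          abs_of_nonneg (by linarith : (0:ℝ) ≤ 1 - ρ), abs_of_nonneg hρ0.le]
        ring
      rw [hexp]
      have hl := hlip u ustar
      have hd := hdiss u ustar
      have hc1 := mul_le_mul_of_nonneg_left hl (sq_nonneg (1 - ρ))
      have hc2 := mul_le_mul_of_nonneg_left hd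
        (by nlinarith : (0:ℝ) ≤ 2 * ((1 - ρ) * ρ))
      have hc3 := mul_le_mul_of_nonneg_right hpoly (sq_nonneg ‖u - ustar‖)
      nlinarith [hc1, hc2, hc3]
    have hWn : ‖W‖ ≤ t * δ₁ + t * ‖ah - ΦN u‖ := by
      calc ‖W‖ ≤ ‖(1 - ρ) • (ΦN u - Φ u)‖ + ‖(1 - ρ) • (ah - ΦN u)‖ := norm_add_le _ _
        _ = t * ‖ΦN u - Φ u‖ + t * ‖ah - ΦN u‖ := by
            rw [norm_smul, norm_smul, Real.norm_eq_abs,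
              abs_of_nonneg (by linarith : (0:ℝ) ≤ 1 - ρ), h1ρt]
        _ ≤ t * δ₁ + t * ‖ah - ΦN u‖ :=
            add_le_add_left (mul_le_mul_of_nonneg_left (hΦN _) ht0.le) _
    have hW2 : ‖W‖ ^ 2 ≤ 2 * t ^ 2 * (δ₁ ^ 2 + ‖ah - ΦN u‖ ^ 2) := by
      have h6 := pow_le_pow_left₀ (norm_nonneg W) hWn 2
      nlinarith [sq_nonneg (δ₁ - ‖ah - ΦN u‖), sq_nonneg t]
    have hY := young_norm_sq hε X W
    have hm1 : (1 + ε) * ‖X‖ ^ 2 ≤ (1 + ε) * (ρ * ‖u - ustar‖ ^ 2) :=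
      mul_le_mul_of_nonneg_left hX2 (by linarith)
    have hm2 : (1 + ε⁻¹) * ‖W‖ ^ 2
        ≤ (1 + ε⁻¹) * (2 * t ^ 2 * (δ₁ ^ 2 + ‖ah - ΦN u‖ ^ 2)) :=
      mul_le_mul_of_nonneg_left hW2 (by linarith)
    have hfin : (1 + ε) * (ρ * ‖u - ustar‖ ^ 2)
        + (1 + ε⁻¹) * (2 * t ^ 2 * (δ₁ ^ 2 + ‖ah - ΦN u‖ ^ 2))
        = η * ‖u - ustar‖ ^ 2 + K * (δ₁ ^ 2 + ‖ah - ΦN u‖ ^ 2) := by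
      rw [← hερη, hK_def]
      ring
    rw [hdecomp]
    linarith
  -- one-step expectation bound
  have hstep : ∀ k, ∫ ω, ‖U (k+1) ω - ustar‖ ^ 2 ∂μ
      ≤ η * ∫ ω, ‖U k ω - ustar‖ ^ 2 ∂μ + K * (δ₁ ^ 2 + δ₂) := by
    intro k
    have hint1 : Integrable (fun ω => η * ‖U k ω - ustar‖ ^ 2) μ := (heint k).const_mul η
    have hint2 : Integrable (fun ω => δ₁ ^ 2 + ‖Φhat k ω - ΦN (U k ω)‖ ^ 2) μ :=
      (integrable_const (δ₁ ^ 2)).add (hξint k)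
    have hint3 : Integrable
        (fun ω => K * (δ₁ ^ 2 + ‖Φhat k ω - ΦN (U k ω)‖ ^ 2)) μ := hint2.const_mul K
    calc ∫ ω, ‖U (k+1) ω - ustar‖ ^ 2 ∂μ
        ≤ ∫ ω, (η * ‖U k ω - ustar‖ ^ 2
            + K * (δ₁ ^ 2 + ‖Φhat k ω - ΦN (U k ω)‖ ^ 2)) ∂μ :=
          integral_mono_of_nonneg
            (Filter.Eventually.of_forall fun ω => by positivity)
            (hint1.add hint3)
            (Filter.Eventually.of_forall (hpt k))
      _ = η * ∫ ω, ‖U k ω - ustar‖ ^ 2 ∂μ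
          + K * (δ₁ ^ 2 + ∫ ω, ‖Φhat k ω - ΦN (U k ω)‖ ^ 2 ∂μ) := by
          rw [integral_add hint1 hint3, integral_const_mul, integral_const_mul,
            integral_add (integrable_const _) (hξint k), integral_const]
          simp [measure_univ]
      _ ≤ η * ∫ ω, ‖U k ω - ustar‖ ^ 2 ∂μ + K * (δ₁ ^ 2 + δ₂) := by
          have h6 := hvar' k
          nlinarith [mul_le_mul_of_nonneg_left
            (add_le_add_left h6 (δ₁ ^ 2)) hK.le]
  -- conclusion by induction
  intro k
  induction k with
  | zero =>
    rw [hU0]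
    rw [integral_const]
    simp only [measure_univ, probReal_univ, ENNReal.toReal_one, one_smul, pow_zero, one_mul]
    have : 0 ≤ C' * (δ₁ ^ 2 + δ₂) :=
      mul_nonneg hC'.le (add_nonneg (sq_nonneg _) hδ₂)
    linarith
  | succ n ih =>
    calc ∫ ω, ‖U (n+1) ω - ustar‖ ^ 2 ∂μ
        ≤ η * ∫ ω, ‖U n ω - ustar‖ ^ 2 ∂μ + K * (δ₁ ^ 2 + δ₂) := hstep n
      _ ≤ η * (η ^ n * ‖u0 - ustar‖ ^ 2 + C' * (δ₁ ^ 2 + δ₂)) + K * (δ₁ ^ 2 + δ₂) :=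
          add_le_add_left (mul_le_mul_of_nonneg_left ih hη0.le) _
      _ = η ^ (n+1) * ‖u0 - ustar‖ ^ 2 + (η * C' + K) * (δ₁ ^ 2 + δ₂) := by ring
      _ = η ^ (n+1) * ‖u0 - ustar‖ ^ 2 + C' * (δ₁ ^ 2 + δ₂) := by rw [hC'K]
end
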